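/- arXiv:1411.1624 — 3 statements merged into one kernel-verified Lean document; each statement's English description precedes it below -/
import Mathlib

section
/- Fix δ > 0. Let (κ_n) and (v_n) be sequences with κ_n ≥ δ and v_n > 0 for all n, and set c_n := C_BS(κ_n, v_n). If c_n → 0 as n → ∞, then v_n ~ √(2(−log c_n + κ_n)) − √(2(−log c_n)), i.e. the ratio of v_n to this expression tends to 1. -/
open MeasureTheory Filter Topology Set

/-- Standard normal density `φ(z) = e^{-z²/2}/√(2π)`. -/
noncomputable def stdPDF (z : ℝ) : ℝ := Real.exp (-(z^2)/2) / Real.sqrt (2*Real.pi)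

/-- Standard normal distribution function `Φ(z) = ∫_{-∞}^z φ(t) dt`. -/
noncomputable def stdCDF (z : ℝ) : ℝ := ∫ t in Set.Iic z, stdPDF t

/-- Black–Scholes call price `C_BS(κ,v) = Φ(d1) - e^κ Φ(d2)` with
`d1 = -κ/v + v/2`, `d2 = -κ/v - v/2`. -/
noncomputable def CBS (κ v : ℝ) : ℝ :=
  stdCDF (-κ/v + v/2) - Real.exp κ * stdCDF (-κ/v - v/2)

lemma stdPDF_pos (z : ℝ) : 0 < stdPDF z :=
  div_pos (Real.exp_pos _) (Real.sqrt_pos.2 (by positivity))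

lemma stdPDF_nonneg (z : ℝ) : 0 ≤ stdPDF z := (stdPDF_pos z).le

lemma stdPDF_neg (z : ℝ) : stdPDF (-z) = stdPDF z := by simp [stdPDF]

lemma continuous_stdPDF : Continuous stdPDF := by
  unfold stdPDF
  fun_prop

lemma integrable_stdPDF : Integrable stdPDF := by
  have h : Integrable (fun z : ℝ => Real.exp (-(1/2) * z^2)) :=
    integrable_exp_neg_mul_sq (by norm_num)
  have := h.div_const (Real.sqrt (2*Real.pi))
  apply this.congr
  filter_upwards with z
  simp [stdPDF]; ring_nf

lemma integrableOn_stdPDF (s : Set ℝ) : IntegrableOn stdPDF s := integrable_stdPDF.integrableOn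

lemma stdCDF_nonneg (z : ℝ) : 0 ≤ stdCDF z :=
  setIntegral_nonneg measurableSet_Iic fun t _ => stdPDF_nonneg t

lemma stdCDF_mono {a b : ℝ} (h : a ≤ b) : stdCDF a ≤ stdCDF b := by
  apply setIntegral_mono_set (integrableOn_stdPDF _)
    (Filter.Eventually.of_forall fun t => stdPDF_nonneg t)
  exact HasSubset.Subset.eventuallyLE (Set.Iic_subset_Iic.2 h)

lemma stdCDF_pos (z : ℝ) : 0 < stdCDF z := by
  rw [stdCDF, setIntegral_pos_iff_support_of_nonneg_ae
    (Filter.Eventually.of_forall fun t => stdPDF_nonneg t) (integrableOn_stdPDF _)]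
  have : Function.support stdPDF = Set.univ := by
    ext t; simp [Function.support, (stdPDF_pos t).ne']
  rw [this, Set.univ_inter, Real.volume_Iic]
  exact ENNReal.zero_lt_top

lemma hasDerivAt_stdPDF (t : ℝ) : HasDerivAt stdPDF (-t * stdPDF t) t := by
  have h1 : HasDerivAt (fun t : ℝ => -(t^2)/2) (-t) t := by
    have := (hasDerivAt_pow 2 t).neg.div_const 2
    refine this.congr_deriv ?_
    push_cast; ring
  have h2 := (h1.exp).div_const (Real.sqrt (2*Real.pi))
  refine h2.congr_deriv ?_
  unfold stdPDF; ring

lemma tendsto_stdPDF_atBot : Tendsto stdPDF atBot (𝓝 0) := by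
  have hsq : Tendsto (fun t : ℝ => t^2) atBot atTop := by
    have h2 : Tendsto (fun x : ℝ => x^2) atTop atTop := tendsto_pow_atTop (by norm_num)
    have := h2.comp (tendsto_abs_atBot_atTop (G := ℝ))
    apply this.congr
    intro x; simp [Function.comp, sq_abs]
  have h : Tendsto (fun t : ℝ => -(t^2)/2) atBot atBot := by
    apply Tendsto.atBot_div_const (by norm_num)
    exact tendsto_neg_atBot_iff.2 hsq
  have h3 := (Real.tendsto_exp_atBot.comp h).div_const (Real.sqrt (2*Real.pi))
  rw [zero_div] at h3
  apply h3.congr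
  intro x; simp [stdPDF, Function.comp]


lemma integrableOn_stdPDF_div_even {a : ℝ} (ha : a < 0) (k : ℕ) (hk : k ≠ 0) :
    IntegrableOn (fun t => stdPDF t / t^(2*k)) (Set.Iic a) := by
  apply Integrable.mono ((integrable_stdPDF.div_const (a^(2*k))).integrableOn)
  · exact (continuous_stdPDF.measurable.div (measurable_id.pow_const _)).aestronglyMeasurable
  · rw [ae_restrict_iff' measurableSet_Iic]
    apply ae_of_all
    intro t ht
    have hta : |a| ≤ |t| := by
      rw [abs_of_nonpos ha.le, abs_of_nonpos (ht.trans ha.le)]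
      linarith [ht.out]
    have h2k : Even (2*k) := even_two_mul k
    have h0 : (0:ℝ) < a^(2*k) := h2k.pow_pos ha.ne
    have h0t : (0:ℝ) < t^(2*k) := h2k.pow_pos (ht.out.trans_lt ha).ne
    have h1 : a^(2*k) ≤ t^(2*k) := by
      calc a^(2*k) = |a|^(2*k) := by rw [← abs_pow, abs_of_pos h0]
        _ ≤ |t|^(2*k) := pow_le_pow_left₀ (abs_nonneg _) hta _
        _ = t^(2*k) := by rw [← abs_pow, abs_of_pos h0t]
    rw [Real.norm_eq_abs, Real.norm_eq_abs,
      abs_of_nonneg (div_nonneg (stdPDF_nonneg t) h0t.le),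
      abs_of_nonneg (div_nonneg (stdPDF_nonneg t) h0.le)]
    exact div_le_div_of_nonneg_left (stdPDF_nonneg t) h0 h1

lemma tendsto_aux_pow (k : ℕ) (hk : k ≠ 0) :
    Tendsto (fun t : ℝ => stdPDF t * ((-t)^k)⁻¹) atBot (𝓝 0) := by
  have h1 : Tendsto (fun t : ℝ => (-t)^k) atBot atTop :=
    (tendsto_pow_atTop hk).comp tendsto_neg_atBot_atTop
  have h2 := h1.inv_tendsto_atTop
  have := tendsto_stdPDF_atBot.mul h2
  simpa using this

lemma mills_id1 {x : ℝ} (hx : x < 0) :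
    stdCDF x + (∫ t in Set.Iic x, stdPDF t / t^2) = stdPDF x / (-x) := by
  have key : (∫ t in Set.Iic x, (stdPDF t + stdPDF t / t^2)) = -stdPDF x / x - 0 := by
    apply integral_Iic_of_hasDerivAt_of_tendsto'
      (f := fun t => -stdPDF t / t) (f' := fun t => stdPDF t + stdPDF t / t^2)
    · intro t ht
      have htne : t ≠ 0 := (ht.out.trans_lt hx).ne
      have := ((hasDerivAt_stdPDF t).neg.div (hasDerivAt_id t) htne)
      refine this.congr_deriv ?_
      simp only [Pi.neg_apply, id]
      field_simp
      ring
    · exact (integrableOn_stdPDF _).add (by simpa using integrableOn_stdPDF_div_even hx 1 one_ne_zero)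
    · have := tendsto_aux_pow 1 one_ne_zero
      apply this.congr
      intro t
      rw [pow_one, inv_neg, div_eq_mul_inv]
      ring
  rw [integral_add (integrableOn_stdPDF _)
    (by simpa [IntegrableOn] using integrableOn_stdPDF_div_even hx 1 one_ne_zero)] at key
  rw [stdCDF, key, sub_zero, neg_div, div_neg]

lemma mills_id2 {x : ℝ} (hx : x < 0) :
    (∫ t in Set.Iic x, stdPDF t / t^2) + 3 * (∫ t in Set.Iic x, stdPDF t / t^4) 
      = stdPDF x / (-x)^3 := by
  have hI2 : IntegrableOn (fun t => stdPDF t / t^2) (Set.Iic x) := by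
    simpa using integrableOn_stdPDF_div_even hx 1 one_ne_zero
  have hI4 : IntegrableOn (fun t => stdPDF t / t^4) (Set.Iic x) := by
    simpa using integrableOn_stdPDF_div_even hx 2 two_ne_zero
  have key : (∫ t in Set.Iic x, (stdPDF t / t^2 + 3 * (stdPDF t / t^4))) = -stdPDF x / x^3 - 0 := by
    apply integral_Iic_of_hasDerivAt_of_tendsto'
      (f := fun t => -stdPDF t / t^3) (f' := fun t => stdPDF t / t^2 + 3 * (stdPDF t / t^4))
    · intro t ht
      have htne : t ≠ 0 := (ht.out.trans_lt hx).ne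
      have hpow : (t:ℝ)^3 ≠ 0 := pow_ne_zero _ htne
      have := ((hasDerivAt_stdPDF t).neg.div (hasDerivAt_pow 3 t) hpow)
      refine this.congr_deriv ?_
      simp only [Pi.neg_apply, id]
      field_simp
      ring
    · exact hI2.add (hI4.const_mul 3)
    · have := tendsto_aux_pow 3 three_ne_zero
      apply this.congr
      intro t
      rw [Odd.neg_pow (by decide : Odd 3), inv_neg, div_eq_mul_inv]
      ring
  rw [integral_add hI2 (hI4.const_mul 3), integral_const_mul] at key
  rw [key, sub_zero, Odd.neg_pow (by decide : Odd 3), div_neg, neg_div]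


lemma mills_upper1 {x : ℝ} (hx : x < 0) : stdCDF x ≤ stdPDF x / (-x) := by
  have h := mills_id1 hx
  have h2 : 0 ≤ ∫ t in Set.Iic x, stdPDF t / t^2 :=
    setIntegral_nonneg measurableSet_Iic fun t _ => div_nonneg (stdPDF_nonneg t) (sq_nonneg t)
  linarith

lemma mills_lower {x : ℝ} (hx : x < 0) :
    stdPDF x * (1/(-x) - 1/(-x)^3) ≤ stdCDF x := by
  have h1 := mills_id1 hx
  have h2 := mills_id2 hx
  have h4 : 0 ≤ ∫ t in Set.Iic x, stdPDF t / t^4 :=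
    setIntegral_nonneg measurableSet_Iic fun t _ =>
      div_nonneg (stdPDF_nonneg t) (by positivity)
  have e1 : stdPDF x * (1/(-x) - 1/(-x)^3) = stdPDF x / (-x) - stdPDF x / (-x)^3 := by
    ring
  linarith

lemma mills_upper3 {x : ℝ} (hx : x < 0) :
    stdCDF x ≤ stdPDF x * (1/(-x) - 1/(-x)^3 + 3/(-x)^5) := by
  have h1 := mills_id1 hx
  have h2 := mills_id2 hx
  have hx2 : (0:ℝ) < x^2 := by
    have := sq_nonneg x
    rcases this.lt_or_eq with h | h
    · exact h
    · exact absurd (pow_eq_zero_iff (n := 2) (by norm_num) |>.1 h.symm) hx.ne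
  have hI2 : IntegrableOn (fun t => stdPDF t / t^2) (Set.Iic x) := by
    simpa using integrableOn_stdPDF_div_even hx 1 one_ne_zero
  have hI4le : (∫ t in Set.Iic x, stdPDF t / t^4)
      ≤ (∫ t in Set.Iic x, stdPDF t / t^2) / x^2 := by
    rw [div_eq_mul_inv, ← integral_mul_const]
    apply setIntegral_mono_on (by simpa using integrableOn_stdPDF_div_even hx 2 two_ne_zero)
      (hI2.mul_const _) measurableSet_Iic
    intro t ht
    have ht0 : t < 0 := lt_of_le_of_lt ht hx
    have ht2 : (0:ℝ) < t^2 := by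
      have := sq_nonneg t
      rcases this.lt_or_eq with h | h
      · exact h
      · exact absurd (pow_eq_zero_iff (n := 2) (by norm_num) |>.1 h.symm) ht0.ne
    have htx : x^2 ≤ t^2 := by nlinarith [ht.out]
    calc stdPDF t / t^4 ≤ stdPDF t / (t^2 * x^2) := by
          apply div_le_div_of_nonneg_left (stdPDF_nonneg t) (by positivity)
          nlinarith
      _ = stdPDF t / t^2 * (x^2)⁻¹ := by rw [← div_div, div_eq_mul_inv]
  have hI2ub : (∫ t in Set.Iic x, stdPDF t / t^2) ≤ stdPDF x / (-x)^3 := by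
    have h4 : 0 ≤ ∫ t in Set.Iic x, stdPDF t / t^4 :=
      setIntegral_nonneg measurableSet_Iic fun t _ =>
        div_nonneg (stdPDF_nonneg t) (by positivity)
    linarith
  have hI4ub : (∫ t in Set.Iic x, stdPDF t / t^4) ≤ stdPDF x / (-x)^5 := by
    refine hI4le.trans ?_
    have heq : stdPDF x / (-x)^5 = (stdPDF x / (-x)^3) / x^2 := by
      rw [div_div]; congr 1; ring
    rw [heq]; gcongr
  have e2 : stdPDF x * (1/(-x) - 1/(-x)^3 + 3/(-x)^5)
      = stdPDF x/(-x) - stdPDF x/(-x)^3 + 3*(stdPDF x/(-x)^5) := by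
    ring
  linarith

lemma exp_mul_stdCDF (kk v a : ℝ) :
    Real.exp kk * stdCDF a
      = ∫ s in Set.Iic (a+v), stdPDF s * Real.exp (kk + s*v - v^2/2) := by
  have h1 : ∀ s : ℝ, stdPDF s * Real.exp (kk + s*v - v^2/2)
      = Real.exp kk * stdPDF (s - v) := by
    intro s
    unfold stdPDF
    rw [div_mul_eq_mul_div, mul_div_assoc', ← Real.exp_add, ← Real.exp_add]
    congr 2
    ring
  simp_rw [h1]
  rw [integral_const_mul]
  congr 1
  rw [stdCDF, ← integral_indicator measurableSet_Iic, ← integral_indicator measurableSet_Iic]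
  have h2 : (Set.Iic (a+v)).indicator (fun s => stdPDF (s - v))
      = fun s => (Set.Iic a).indicator stdPDF (s - v) := by
    ext s
    have hiff : (s - v ≤ a) ↔ (s ≤ a + v) := sub_le_iff_le_add
    simp [Set.indicator_apply, Set.mem_Iic, hiff]
  rw [h2, integral_sub_right_eq_self (fun s => (Set.Iic a).indicator stdPDF s) v]

lemma CBS_lb {κ v : ℝ} (hκ : 0 < κ) (hv : 0 < v) :
    (1 - Real.exp (-v)) * stdCDF (-κ/v + v/2 - 1) ≤ CBS κ v := by
  set d1 := -κ/v + v/2 with hd1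
  have hd2 : -κ/v - v/2 = d1 - v := by rw [hd1]; ring
  have hd1v : d1 * v = -κ + v^2/2 := by rw [hd1]; field_simp
  clear_value d1
  have key : Real.exp κ * stdCDF (-κ/v - v/2)
      = ∫ s in Set.Iic d1, stdPDF s * Real.exp (κ + s*v - v^2/2) := by
    rw [hd2]
    have := exp_mul_stdCDF κ v (d1 - v)
    rwa [sub_add_cancel] at this
  set g : ℝ → ℝ := fun s => stdPDF s * Real.exp (κ + s*v - v^2/2) with hg
  have hgnn : ∀ s, 0 ≤ g s := fun s => mul_nonneg (stdPDF_nonneg s) (Real.exp_pos _).le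
  have hgle : ∀ s ∈ Set.Iic d1, g s ≤ stdPDF s := by
    intro s hs
    have : κ + s*v - v^2/2 ≤ 0 := by
      have : s * v ≤ d1 * v := mul_le_mul_of_nonneg_right hs hv.le
      rw [hd1v] at this
      linarith
    calc g s ≤ stdPDF s * 1 := by
          apply mul_le_mul_of_nonneg_left _ (stdPDF_nonneg s)
          exact Real.exp_le_one_iff.2 this
      _ = stdPDF s := mul_one _
  have hgmeas : AEStronglyMeasurable g (volume.restrict (Set.Iic d1)) := by
    apply Continuous.aestronglyMeasurable
    exact continuous_stdPDF.mul (by fun_prop)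
  have hgint : IntegrableOn g (Set.Iic d1) := by
    apply Integrable.mono (integrableOn_stdPDF (Set.Iic d1)) hgmeas
    rw [ae_restrict_iff' measurableSet_Iic]
    apply ae_of_all
    intro s hs
    rw [Real.norm_eq_abs, Real.norm_eq_abs, abs_of_nonneg (hgnn s),
      abs_of_nonneg (stdPDF_nonneg s)]
    exact hgle s hs
  -- split
  have hsplit : (∫ s in Set.Iic d1, g s)
      = (∫ s in Set.Iic (d1-1), g s) + ∫ s in Set.Ioc (d1-1) d1, g s := by
    rw [← setIntegral_union (Set.Iic_disjoint_Ioc le_rfl) measurableSet_Ioc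
      (hgint.mono_set (Set.Iic_subset_Iic.2 (by linarith)))
      (hgint.mono_set Set.Ioc_subset_Iic_self),
      Set.Iic_union_Ioc_eq_Iic (by linarith)]
  have hsplitφ : stdCDF d1
      = stdCDF (d1-1) + ∫ s in Set.Ioc (d1-1) d1, stdPDF s := by
    rw [stdCDF, stdCDF,
      ← setIntegral_union (Set.Iic_disjoint_Ioc le_rfl) measurableSet_Ioc
      (integrableOn_stdPDF _) (integrableOn_stdPDF _),
      Set.Iic_union_Ioc_eq_Iic (by linarith)]
  have hb1 : (∫ s in Set.Iic (d1-1), g s) ≤ Real.exp (-v) * stdCDF (d1-1) := by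
    rw [stdCDF, ← integral_const_mul]
    apply setIntegral_mono_on (hgint.mono_set (Set.Iic_subset_Iic.2 (by linarith)))
      ((integrableOn_stdPDF _).const_mul _) measurableSet_Iic
    intro s hs
    have hsv : κ + s*v - v^2/2 ≤ -v := by
      have h4 : s * v ≤ (d1 - 1) * v := mul_le_mul_of_nonneg_right hs hv.le
      have h3 : (d1-1)*v = d1*v - v := by ring
      linarith
    rw [hg]
    calc stdPDF s * Real.exp (κ + s*v - v^2/2) ≤ stdPDF s * Real.exp (-v) := by
          apply mul_le_mul_of_nonneg_left _ (stdPDF_nonneg s)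
          exact Real.exp_le_exp.2 hsv
      _ = Real.exp (-v) * stdPDF s := mul_comm _ _
  have hb2 : (∫ s in Set.Ioc (d1-1) d1, g s) ≤ ∫ s in Set.Ioc (d1-1) d1, stdPDF s := by
    apply setIntegral_mono_on (hgint.mono_set Set.Ioc_subset_Iic_self)
      (integrableOn_stdPDF _) measurableSet_Ioc
    intro s hs
    exact hgle s (Set.Ioc_subset_Iic_self hs)
  have : CBS κ v = stdCDF d1 - ∫ s in Set.Iic d1, g s := by
    rw [CBS, ← hd1, key]
  rw [this, hsplit, hsplitφ]
  nlinarith [stdCDF_nonneg (d1-1), Real.exp_pos (-v)]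

lemma CBS_pos {κ v : ℝ} (hκ : 0 < κ) (hv : 0 < v) : 0 < CBS κ v := by
  have h := CBS_lb hκ hv
  have h1 : 0 < 1 - Real.exp (-v) := by
    have : Real.exp (-v) < 1 := Real.exp_lt_one_iff.2 (by linarith)
    linarith
  exact lt_of_lt_of_le (mul_pos h1 (stdCDF_pos _)) h

lemma CBS_ub (κ v : ℝ) : CBS κ v ≤ stdCDF (-κ/v + v/2) := by
  rw [CBS]
  have : 0 ≤ Real.exp κ * stdCDF (-κ/v - v/2) :=
    mul_nonneg (Real.exp_pos _).le (stdCDF_nonneg _)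
  linarith


lemma bracket_ineq {δ x y : ℝ} (hδ : 0 < δ) (hx : 0 < x) (hxy : x ≤ y)
    (hk : 2*δ ≤ y^2 - x^2) :
    (y - x)/(x*y) * (1 - (3+3/δ)/x^2)
      ≤ (1/x - 1/x^3) - (1/y - 1/y^3 + 3/y^5) := by
  have hy : 0 < y := lt_of_lt_of_le hx hxy
  have hvy : δ ≤ (y - x) * y := by nlinarith
  have step1 : 1/x^3 - 1/y^3 ≤ 3*(y-x)/(x^3*y) := by
    rw [div_sub_div _ _ (by positivity) (by positivity),
      div_le_div_iff₀ (by positivity) (by positivity)]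
    have h5 : y^2 + x*y + x^2 ≤ 3*y^2 := by nlinarith
    have hcube : y^3 - x^3 ≤ (y-x)*(3*y^2) := by
      have h6 : y^3 - x^3 = (y-x)*(y^2+x*y+x^2) := by ring
      rw [h6]
      exact mul_le_mul_of_nonneg_left h5 (sub_nonneg.2 hxy)
    nlinarith [mul_le_mul_of_nonneg_right hcube (show (0:ℝ) ≤ x^3*y by positivity)]
  have step2 : 3/y^5 ≤ (3/δ)*(y-x)/(x^3*y) := by
    rw [div_le_div_iff₀ (by positivity) (by positivity)]
    have h1 : 3*y^3 ≤ (3/δ)*((y-x)*y)*y^3 := by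
      have h00 : (1:ℝ) ≤ (y-x)*y/δ := (one_le_div hδ).2 hvy
      have h0 := mul_le_mul_of_nonneg_right h00 (show (0:ℝ) ≤ 3*y^3 by positivity)
      calc 3*y^3 = 1*(3*y^3) := by ring
        _ ≤ ((y-x)*y/δ)*(3*y^3) := h0
        _ = (3/δ)*((y-x)*y)*y^3 := by ring
    have h2 : x^3 ≤ y^3 := pow_le_pow_left₀ hx.le hxy 3
    calc 3*(x^3*y) ≤ 3*(y^3*y) := by
          nlinarith [mul_le_mul_of_nonneg_right h2 hy.le]
      _ ≤ (3/δ)*((y-x)*y)*y^3*y := by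
          nlinarith [mul_le_mul_of_nonneg_right h1 hy.le]
      _ = (3/δ)*(y-x)/1*y^5 := by ring
      _ = (3/δ)*(y-x)*y^5 := by ring
  have step0 : 1/x - 1/y = (y-x)/(x*y) := by
    field_simp
  have step3 : (y-x)/(x*y) * (1 - (3+3/δ)/x^2)
      = (y-x)/(x*y) - 3*(y-x)/(x^3*y) - (3/δ)*(y-x)/(x^3*y) := by
    field_simp
    ring
  linarith

lemma CBS_xy_upper {κ v : ℝ} (hx : 0 < κ/v - v/2) :
    CBS κ v ≤ stdPDF (κ/v - v/2) / (κ/v - v/2) := by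
  have h1 : CBS κ v ≤ stdCDF (-κ/v + v/2) := by
    rw [CBS]
    have : 0 ≤ Real.exp κ * stdCDF (-κ/v - v/2) :=
      mul_nonneg (Real.exp_pos _).le (stdCDF_nonneg _)
    linarith
  have h2 : -κ/v + v/2 = -(κ/v - v/2) := by ring
  have h3 := mills_upper1 (x := -(κ/v - v/2)) (by linarith)
  rw [stdPDF_neg, neg_neg] at h3
  rw [h2] at h1
  exact h1.trans h3

lemma CBS_xy_lower {δ κ v : ℝ} (hδ : 0 < δ) (hκ : δ ≤ κ) (hv : 0 < v)
    (hx : 0 < κ/v - v/2) :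
    stdPDF (κ/v - v/2) * ((v/((κ/v - v/2)*(κ/v + v/2))) * (1 - (3+3/δ)/(κ/v - v/2)^2))
      ≤ CBS κ v := by
  set x := κ/v - v/2 with hxdef
  set y := κ/v + v/2 with hydef
  have hyx : y - x = v := by rw [hxdef, hydef]; ring
  have hy2x2 : y^2 - x^2 = 2*κ := by
    rw [hxdef, hydef]; field_simp; ring
  have hxy : x ≤ y := by rw [hxdef, hydef]; linarith
  have hy : 0 < y := lt_of_lt_of_le hx hxy
  clear_value x y
  have hL : stdPDF x * (1/x - 1/x^3) ≤ stdCDF (-κ/v + v/2) := by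
    have h2 : -κ/v + v/2 = -x := by rw [hxdef]; ring
    have h3 := mills_lower (x := -x) (by linarith)
    rw [stdPDF_neg, neg_neg] at h3
    rw [h2]
    exact h3
  have hU : Real.exp κ * stdCDF (-κ/v - v/2)
      ≤ stdPDF x * (1/y - 1/y^3 + 3/y^5) := by
    have h2 : -κ/v - v/2 = -y := by rw [hydef]; ring
    have h3 := mills_upper3 (x := -y) (by linarith)
    rw [stdPDF_neg, neg_neg] at h3
    rw [h2]
    have h4 : Real.exp κ * stdPDF y = stdPDF x := by
      unfold stdPDF
      rw [mul_div_assoc', ← Real.exp_add]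
      congr 2
      nlinarith [hy2x2]
    calc Real.exp κ * stdCDF (-y)
        ≤ Real.exp κ * (stdPDF y * (1/y - 1/y^3 + 3/y^5)) := by
          apply mul_le_mul_of_nonneg_left h3 (Real.exp_pos _).le
      _ = stdPDF x * (1/y - 1/y^3 + 3/y^5) := by rw [← mul_assoc, h4]
  have hbr := bracket_ineq hδ hx hxy (by linarith)
  have key : stdPDF x * ((y-x)/(x*y) * (1 - (3+3/δ)/x^2)) ≤ CBS κ v := by
    rw [CBS]
    calc stdPDF x * ((y-x)/(x*y) * (1 - (3+3/δ)/x^2))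
        ≤ stdPDF x * ((1/x - 1/x^3) - (1/y - 1/y^3 + 3/y^5)) :=
          mul_le_mul_of_nonneg_left hbr (stdPDF_nonneg x)
      _ = stdPDF x * (1/x - 1/x^3) - stdPDF x * (1/y - 1/y^3 + 3/y^5) := by ring
      _ ≤ stdCDF (-κ/v + v/2) - Real.exp κ * stdCDF (-κ/v - v/2) := by
          apply sub_le_sub hL hU
  rw [hyx] at key
  exact key


set_option maxHeartbeats 1000000 in
/-- **From call price to implied volatility, κ bounded away from zero.**
If `κ n ≥ δ > 0`, `v n > 0` and `c n = C_BS(κ n, v n) → 0`, then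
`v n ~ √(2(-log c n + κ n)) - √(2(-log c n))`. -/
theorem implied_vol_kappa_bounded_away (δ : ℝ) (hδ : 0 < δ)
    (κ v : ℕ → ℝ) (hκ : ∀ n, δ ≤ κ n) (hv : ∀ n, 0 < v n)
    (c : ℕ → ℝ) (hc : ∀ n, c n = CBS (κ n) (v n))
    (h0 : Tendsto c atTop (𝓝 0)) :
    Tendsto (fun n => v n /
        (Real.sqrt (2 * (-Real.log (c n) + κ n)) - Real.sqrt (2 * (-Real.log (c n)))))
      atTop (𝓝 1) := by
  have hκpos : ∀ n, 0 < κ n := fun n => lt_of_lt_of_le hδ (hκ n)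
  set x : ℕ → ℝ := fun n => κ n / v n - v n / 2 with hxdef
  set y : ℕ → ℝ := fun n => κ n / v n + v n / 2 with hydef
  set L : ℕ → ℝ := fun n => -Real.log (c n) with hLdef
  have hcpos : ∀ n, 0 < c n := fun n => (hc n) ▸ CBS_pos (hκpos n) (hv n)
  have hyx : ∀ n, y n - x n = v n := fun n => by simp only [hxdef, hydef]; ring
  have hy2 : ∀ n, (y n)^2 = (x n)^2 + 2*κ n := by
    intro n
    simp only [hxdef, hydef]
    field_simp [(hv n).ne']
    ring
  have hypos : ∀ n, 0 < y n := fun n =>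
    add_pos (div_pos (hκpos n) (hv n)) (by linarith [hv n])
  clear_value x y L
  -- Step A : x → ∞
  have hxtop : Tendsto x atTop atTop := by
    rw [tendsto_atTop]
    intro M
    set M₀ : ℝ := max M 0 with hM₀
    have hM₀0 : 0 ≤ M₀ := le_max_right _ _
    have hMle : M ≤ M₀ := le_max_left _ _
    set v₀ : ℝ := min 1 (δ/(M₀+1)) with hv₀
    have hv₀pos : 0 < v₀ := lt_min one_pos (div_pos hδ (by linarith))
    have hv₀1 : v₀ ≤ 1 := min_le_left _ _
    have hv₀2 : v₀ ≤ δ/(M₀+1) := min_le_right _ _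
    set ε : ℝ := (1 - Real.exp (-v₀)) * stdCDF (-M₀-1) with hε
    clear_value M₀ v₀
    have hεpos : 0 < ε := by
      apply mul_pos _ (stdCDF_pos _)
      have : Real.exp (-v₀) < 1 := Real.exp_lt_one_iff.2 (by linarith)
      linarith
    clear_value ε
    filter_upwards [h0.eventually (gt_mem_nhds hεpos)] with n hn
    by_contra hcon
    push_neg at hcon
    have hxM : x n < M₀ := lt_of_lt_of_le hcon hMle
    have hκeq : κ n = v n * x n + (v n)^2/2 := by
      simp only [hxdef]
      field_simp [(hv n).ne']
      ring
    have hvn : v₀ ≤ v n := by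
      by_contra hvcon
      push_neg at hvcon
      have h1 : v n * x n ≤ v n * M₀ := mul_le_mul_of_nonneg_left hxM.le (hv n).le
      have h2 : (v n)^2 ≤ v n := by nlinarith [hv n]
      have h3 : v n * M₀ ≤ v₀ * M₀ := mul_le_mul_of_nonneg_right hvcon.le hM₀0
      have h4 : v₀ * (M₀ + 1) ≤ δ := by
        rw [← le_div_iff₀ (by linarith : (0:ℝ) < M₀+1)]
        exact hv₀2
      have h5 : v₀*(M₀+1) = v₀*M₀ + v₀ := by ring
      have h6 := hκ n
      have k1 : κ n ≤ v n * M₀ + v n / 2 := by linarith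
      have k2 : κ n ≤ v₀ * M₀ + v n / 2 := by linarith
      have k3 : κ n < v₀ * M₀ + v₀ / 2 := by linarith
      linarith
    have hlb := CBS_lb (hκpos n) (hv n)
    have harg : -M₀ - 1 ≤ -κ n/(v n) + (v n)/2 - 1 := by
      have : -κ n/(v n) + (v n)/2 = -(x n) := by simp only [hxdef]; ring
      rw [this]
      linarith
    have hmono := stdCDF_mono harg
    have hexp : Real.exp (-(v n)) ≤ Real.exp (-v₀) := Real.exp_le_exp.2 (by linarith)
    have : ε ≤ c n := by
      rw [hc n]
      refine le_trans ?_ hlb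
      rw [hε]
      apply mul_le_mul _ hmono (stdCDF_nonneg _) _
      · linarith
      · have : Real.exp (-(v n)) < 1 := Real.exp_lt_one_iff.2 (by linarith [hv n])
        linarith
    linarith
  -- constants
  set Cst : ℝ := 3 + 3/δ with hCst
  have hCstpos : 0 < Cst := by rw [hCst]; positivity
  set D₀ : ℝ := 2*Real.sqrt (2*Real.pi)*(1/δ+2) with hD₀
  have hD₀pos : 0 < D₀ := by
    rw [hD₀]
    have := Real.sqrt_pos.2 (by positivity : (0:ℝ) < 2*Real.pi)
    positivity
  have hsq2pi : 1 ≤ Real.sqrt (2*Real.pi) := by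
    rw [show (1:ℝ) = Real.sqrt 1 by simp]
    exact Real.sqrt_le_sqrt (by nlinarith [Real.pi_gt_three])
  clear_value Cst D₀
  have hev : ∀ᶠ n in atTop, 1 ≤ x n ∧ 2*Cst + 1 ≤ (x n)^2 := by
    filter_upwards [hxtop.eventually_ge_atTop (max 1 (2*Cst+1))] with n hn
    have h1 : 1 ≤ x n := le_trans (le_max_left _ _) hn
    refine ⟨h1, ?_⟩
    have h2 : 2*Cst+1 ≤ x n := le_trans (le_max_right _ _) hn
    nlinarith
  have hE1 : ∀ᶠ n in atTop, (x n)^2/2 ≤ L n := by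
    filter_upwards [hev] with n hn
    obtain ⟨h1, h2⟩ := hn
    have hxpos : 0 < x n := lt_of_lt_of_le one_pos h1
    have hxn : κ n / v n - v n / 2 = x n := by rw [hxdef]
    have hub := CBS_xy_upper (κ := κ n) (v := v n) (by rw [hxn]; exact hxpos)
    rw [hxn] at hub
    have h3 : c n ≤ Real.exp (-(x n)^2/2) := by
      rw [hc n]
      refine hub.trans ?_
      have hd1 : stdPDF (x n) / x n ≤ stdPDF (x n) := by
        calc stdPDF (x n) / x n ≤ stdPDF (x n) / 1 := by
              apply div_le_div_of_nonneg_left (stdPDF_nonneg _) one_pos h1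
          _ = stdPDF (x n) := div_one _
      refine hd1.trans ?_
      rw [stdPDF]
      calc Real.exp (-(x n)^2/2) / Real.sqrt (2*Real.pi)
          ≤ Real.exp (-(x n)^2/2) / 1 := by
            apply div_le_div_of_nonneg_left (Real.exp_pos _).le one_pos hsq2pi
        _ = Real.exp (-(x n)^2/2) := div_one _
    have h4 : Real.log (c n) ≤ -(x n)^2/2 := by
      have := (Real.log_le_log_iff (hcpos n) (Real.exp_pos _)).2 h3
      rwa [Real.log_exp] at this
    have h5 : -Real.log (c n) = L n := by rw [hLdef]
    linarith
  have hE2 : ∀ᶠ n in atTop, L n ≤ (x n)^2/2 + 3*Real.log (x n) + Real.log D₀ := by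
    filter_upwards [hev] with n hn
    obtain ⟨h1, h2⟩ := hn
    have hxpos : 0 < x n := lt_of_lt_of_le one_pos h1
    have hypn := hypos n
    have hxn : κ n / v n - v n / 2 = x n := by rw [hxdef]
    have hyn : κ n / v n + v n / 2 = y n := by rw [hydef]
    have hlb := CBS_xy_lower hδ (hκ n) (hv n) (by rw [hxn]; exact hxpos)
    rw [hxn, hyn] at hlb
    have hxylen : x n ≤ y n := by
      have := hyx n; have := hv n; linarith
    have e1 : v n * (x n + y n) = 2*κ n := by
      have h' := hyx n
      have h'' := hy2 n
      calc v n * (x n + y n) = (y n - x n) * (x n + y n) := by rw [h']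
        _ = (y n)^2 - (x n)^2 := by ring
        _ = 2*κ n := by rw [h'']; ring
    -- hA : 1/((1/δ+2)x³) ≤ v/(xy)
    have hA : 1/((1/δ+2)*(x n)^3) ≤ v n/((x n)*(y n)) := by
      rw [div_le_div_iff₀ (by positivity) (by positivity)]
      have hG2 : x n * y n * (x n + y n) ≤ 2*κ n*((1/δ+2)*(x n)^3) := by
        have g1 : x n * y n * (x n + y n) ≤ 2*(x n)*(y n)^2 := by
          nlinarith [mul_nonneg (mul_pos hxpos hypn).le (sub_nonneg.2 hxylen)]
        have g2 : 2*(x n)*(y n)^2 = 2*(x n)^3 + 4*κ n*(x n) := by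
          rw [hy2 n]; ring
        have g3 : 2*(x n)^3 ≤ (2/δ)*κ n*(x n)^3 := by
          have hh : (2:ℝ) ≤ (2/δ)*κ n := by
            rw [div_mul_eq_mul_div, le_div_iff₀ hδ]
            linarith [hκ n]
          exact mul_le_mul_of_nonneg_right hh (pow_pos hxpos 3).le
        have g4 : 4*κ n*(x n) ≤ 4*κ n*(x n)^3 := by
          have : x n ≤ (x n)^3 := by nlinarith
          exact mul_le_mul_of_nonneg_left this (by linarith [hκpos n] : (0:ℝ) ≤ 4*κ n)
        have g5 : (2/δ)*κ n*(x n)^3 + 4*κ n*(x n)^3 = 2*κ n*((1/δ+2)*(x n)^3) := by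
          field_simp
          ring
        linarith
      have hxy0 : 0 < x n + y n := by linarith
      have := mul_le_mul_of_nonneg_right hG2 (le_of_lt hxy0)
      have e2 : v n * ((1/δ+2)*(x n)^3) * (x n + y n) = 2*κ n*((1/δ+2)*(x n)^3) := by
        calc v n * ((1/δ+2)*(x n)^3) * (x n + y n)
            = (v n * (x n + y n)) * ((1/δ+2)*(x n)^3) := by ring
          _ = 2*κ n*((1/δ+2)*(x n)^3) := by rw [e1]
      apply le_of_mul_le_mul_right _ hxy0
      calc 1 * (x n * y n) * (x n + y n) = x n * y n * (x n + y n) := by ring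
        _ ≤ 2*κ n*((1/δ+2)*(x n)^3) := hG2
        _ = v n * ((1/δ+2)*(x n)^3) * (x n + y n) := e2.symm
    have hhalf : 1/2 ≤ 1 - Cst/(x n)^2 := by
      have : Cst/(x n)^2 ≤ 1/2 := by
        rw [div_le_iff₀ (by positivity)]
        linarith
      linarith
    have hBn : Real.exp (-(x n)^2/2)/(D₀*(x n)^3) ≤ c n := by
      rw [hc n]
      refine le_trans ?_ hlb
      have hinner : 1/((1/δ+2)*(x n)^3) * (1/2)
          ≤ v n/((x n)*(y n)) * (1 - Cst/(x n)^2) := by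
        apply mul_le_mul hA hhalf (by norm_num) (div_nonneg (hv n).le (mul_pos hxpos hypn).le)
      have houter := mul_le_mul_of_nonneg_left hinner (stdPDF_nonneg (x n))
      have houter' : stdPDF (x n) * (1/((1/δ+2)*(x n)^3) * (1/2))
          ≤ stdPDF (x n) * (v n / (x n * y n) * (1 - (3+3/δ)/(x n)^2)) := by
        rw [← hCst]
        exact houter
      refine le_trans (le_of_eq ?_) houter'
      rw [stdPDF, hD₀]
      have hs : Real.sqrt (2*Real.pi) ≠ 0 := by positivity
      field_simp [hδ.ne', hxpos.ne']
    have hlogB : -(x n)^2/2 - Real.log D₀ - 3*Real.log (x n) ≤ Real.log (c n) := by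
      have hBpos : 0 < Real.exp (-(x n)^2/2)/(D₀*(x n)^3) := by positivity
      have := (Real.log_le_log_iff hBpos (hcpos n)).2 hBn
      rw [Real.log_div (Real.exp_pos _).ne' (by positivity), Real.log_exp,
        Real.log_mul hD₀pos.ne' (by positivity), Real.log_pow] at this
      push_cast at this
      linarith
    have h5 : -Real.log (c n) = L n := by rw [hLdef]
    linarith
  -- limit lemmas
  have hloglim : Tendsto (fun X : ℝ => (6*Real.log X + 2*Real.log D₀)/X^2) atTop (𝓝 0) := by
    have h1 : Tendsto (fun X : ℝ => Real.log X / X) atTop (𝓝 0) := by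
      have := Real.tendsto_pow_log_div_mul_add_atTop 1 0 1 one_ne_zero
      simpa using this
    have h2 : Tendsto (fun X : ℝ => (X:ℝ)⁻¹) atTop (𝓝 0) := tendsto_inv_atTop_zero
    have h3 : Tendsto (fun X : ℝ => 6*(Real.log X / X) * X⁻¹
        + 2*Real.log D₀ * (X⁻¹ * X⁻¹)) atTop (𝓝 0) := by
      have := ((h1.const_mul 6).mul h2).add ((h2.mul h2).const_mul (2*Real.log D₀))
      simpa using this
    apply h3.congr'
    filter_upwards [eventually_gt_atTop (0:ℝ)] with X hX
    rw [eq_div_iff (by positivity : (X:ℝ)^2 ≠ 0)]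
    field_simp
  have htend1 : Tendsto (fun n => 2*L n/(x n)^2) atTop (𝓝 1) := by
    have hub : Tendsto (fun n => 1 + (6*Real.log (x n) + 2*Real.log D₀)/(x n)^2)
        atTop (𝓝 1) := by
      have := (hloglim.comp hxtop).const_add 1
      simpa using this
    apply tendsto_of_tendsto_of_tendsto_of_le_of_le' tendsto_const_nhds hub
    · filter_upwards [hE1, hev] with n hn1 hn2
      have hxpos : 0 < x n := lt_of_lt_of_le one_pos hn2.1
      rw [le_div_iff₀ (by positivity)]
      linarith
    · filter_upwards [hE2, hev] with n hn2 hne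
      have hxpos : 0 < x n := lt_of_lt_of_le one_pos hne.1
      have hx2 : (0:ℝ) < (x n)^2 := by positivity
      rw [div_le_iff₀ hx2]
      have : (1 + (6*Real.log (x n) + 2*Real.log D₀)/(x n)^2) * (x n)^2
          = (x n)^2 + (6*Real.log (x n) + 2*Real.log D₀) := by
        field_simp
      rw [this]
      linarith
  have htendr1 : Tendsto (fun n => Real.sqrt (2*L n)/(x n)) atTop (𝓝 1) := by
    have hsq : Tendsto (fun n => Real.sqrt (2*L n/(x n)^2)) atTop (𝓝 1) := by
      have := (Real.continuous_sqrt.tendsto 1).comp htend1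
      simpa [Function.comp_def] using this
    apply hsq.congr'
    filter_upwards [hE1, hev] with n hn1 hn2
    have hxpos : 0 < x n := lt_of_lt_of_le one_pos hn2.1
    have hL0 : 0 ≤ 2*L n := by nlinarith
    rw [Real.sqrt_div hL0, Real.sqrt_sq hxpos.le]
  have htendm : Tendsto (fun n => (2*L n + 2*κ n)/((x n)^2 + 2*κ n)) atTop (𝓝 1) := by
    apply tendsto_of_tendsto_of_tendsto_of_le_of_le' tendsto_const_nhds htend1
    · filter_upwards [hE1, hev] with n hn1 hn2
      have hxpos : 0 < x n := lt_of_lt_of_le one_pos hn2.1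
      rw [le_div_iff₀ (by nlinarith [hκpos n, sq_nonneg (x n)] : (0:ℝ) < (x n)^2 + 2*κ n)]
      linarith [hκpos n]
    · filter_upwards [hE1, hev] with n hn1 hn2
      have hxpos : 0 < x n := lt_of_lt_of_le one_pos hn2.1
      have hκn := hκpos n
      rw [div_le_div_iff₀ (by nlinarith [sq_nonneg (x n)] : (0:ℝ) < (x n)^2 + 2*κ n)
        (by positivity : (0:ℝ) < (x n)^2)]
      nlinarith
  have htendr2 : Tendsto (fun n => Real.sqrt (2*(L n + κ n))/(y n)) atTop (𝓝 1) := by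
    have hsq : Tendsto (fun n => Real.sqrt ((2*L n + 2*κ n)/((x n)^2 + 2*κ n)))
        atTop (𝓝 1) := by
      have := (Real.continuous_sqrt.tendsto 1).comp htendm
      simpa [Function.comp_def] using this
    apply hsq.congr'
    filter_upwards [hE1, hev] with n hn1 hn2
    have hxpos : 0 < x n := lt_of_lt_of_le one_pos hn2.1
    have hL0 : 0 ≤ 2*L n + 2*κ n := by nlinarith [hκpos n]
    rw [show (x n)^2 + 2*κ n = (y n)^2 by rw [hy2 n],
      Real.sqrt_div (by linarith) _, Real.sqrt_sq (hypos n).le,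
      show 2*L n + 2*κ n = 2*(L n + κ n) by ring]
  -- final assembly
  have hLn : ∀ n, -Real.log (c n) = L n := fun n => by rw [hLdef]
  rw [← tendsto_sub_nhds_zero_iff]
  apply (tendsto_zero_iff_abs_tendsto_zero _).2
  have hbound : Tendsto (fun n => |Real.sqrt (2*(L n + κ n))/(y n) - 1|
      + |Real.sqrt (2*L n)/(x n) - 1|) atTop (𝓝 0) := by
    have h1 : Tendsto (fun n => Real.sqrt (2*(L n + κ n))/(y n) - 1) atTop (𝓝 0) := by
      have := htendr2.sub_const 1
      simpa using this
    have h2 : Tendsto (fun n => Real.sqrt (2*L n)/(x n) - 1) atTop (𝓝 0) := by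
      have := htendr1.sub_const 1
      simpa using this
    have := h1.abs.add h2.abs
    simpa using this
  apply squeeze_zero' (Filter.Eventually.of_forall fun n => abs_nonneg _) _ hbound
  filter_upwards [hE1, hev] with n hn1 hn2
  have hxpos : 0 < x n := lt_of_lt_of_le one_pos hn2.1
  have hypn := hypos n
  have hκn := hκpos n
  have hLpos : 0 < L n := by nlinarith
  set r1 : ℝ := Real.sqrt (2*L n)/(x n) with hr1
  set r2 : ℝ := Real.sqrt (2*(L n + κ n))/(y n) with hr2
  set S : ℝ := Real.sqrt (2*(L n + κ n)) + Real.sqrt (2*L n) with hS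
  set Dn : ℝ := Real.sqrt (2*(L n + κ n)) - Real.sqrt (2*L n) with hDn
  have hs1 : Real.sqrt (2*L n) = x n * r1 := by
    rw [hr1, mul_div_cancel₀ _ hxpos.ne']
  have hs2 : Real.sqrt (2*(L n + κ n)) = y n * r2 := by
    rw [hr2, mul_div_cancel₀ _ hypn.ne']
  have hsqlt : Real.sqrt (2*L n) < Real.sqrt (2*(L n + κ n)) :=
    Real.sqrt_lt_sqrt (by linarith) (by linarith)
  have hDnpos : 0 < Dn := by rw [hDn]; linarith
  have hSpos : 0 < S := by
    rw [hS]
    have := Real.sqrt_nonneg (2*L n)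
    have := Real.sqrt_pos.2 (show 0 < 2*(L n + κ n) by linarith)
    linarith
  have hDS : Dn * S = 2*κ n := by
    rw [hDn, hS]
    have e1 : (Real.sqrt (2*(L n + κ n)))^2 = 2*(L n + κ n) :=
      Real.sq_sqrt (by linarith)
    have e2 : (Real.sqrt (2*L n))^2 = 2*L n := Real.sq_sqrt (by linarith)
    nlinarith [e1, e2]
  have hvxy : v n * (x n + y n) = 2*κ n := by
    have h' := hyx n
    have h'' := hy2 n
    calc v n * (x n + y n) = (y n - x n) * (x n + y n) := by rw [h']
      _ = (y n)^2 - (x n)^2 := by ring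
      _ = 2*κ n := by rw [h'']; ring
  have hxy0 : 0 < x n + y n := by linarith
  have hratio : v n / Dn = S / (x n + y n) := by
    rw [div_eq_div_iff hDnpos.ne' hxy0.ne']
    calc v n * (x n + y n) = 2*κ n := hvxy
      _ = Dn * S := hDS.symm
      _ = S * Dn := mul_comm _ _
  -- rewrite target
  have htarget : v n / (Real.sqrt (2 * (-Real.log (c n) + κ n))
      - Real.sqrt (2 * (-Real.log (c n)))) - 1 = S/(x n + y n) - 1 := by
    rw [hLn n, ← hratio, hDn]
  rw [htarget]
  have hnum : S/(x n + y n) - 1 = (y n * (r2 - 1) + x n * (r1 - 1))/(x n + y n) := by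
    rw [hS, hs1, hs2]
    field_simp
    ring
  rw [hnum, abs_div, abs_of_pos hxy0, div_le_iff₀ hxy0]
  have hb1 : |y n * (r2 - 1) + x n * (r1 - 1)|
      ≤ y n * |r2 - 1| + x n * |r1 - 1| := by
    refine (abs_add_le _ _).trans ?_
    rw [abs_mul, abs_mul, abs_of_pos hypn, abs_of_pos hxpos]
  refine hb1.trans ?_
  have hc1 : y n * |r2 - 1| ≤ (x n + y n) * |r2 - 1| := by
    apply mul_le_mul_of_nonneg_right (by linarith) (abs_nonneg _)
  have hc2 : x n * |r1 - 1| ≤ (x n + y n) * |r1 - 1| := by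
    apply mul_le_mul_of_nonneg_right (by linarith) (abs_nonneg _)
  calc y n * |r2 - 1| + x n * |r1 - 1|
      ≤ (x n + y n) * |r2 - 1| + (x n + y n) * |r1 - 1| := add_le_add hc1 hc2
    _ = (|r2 - 1| + |r1 - 1|) * (x n + y n) := by ring
end

section
/- Fix Merton parameters μ ∈ ℝ, α ∈ ℝ, σ > 0, λ > 0, δ > 0, and for t > 0 let μ_t be the Merton log-return law, i.e. the mixture probability measure μ_t := e^{−λt} Σ_{n=0}^∞ ((λt)^n/n!) · N(μt + nα, σ²t + nδ²), where N(m, s²) denotes the Gaussian measure on ℝ with mean m and variance s². Let f(a) := min_{n ∈ ℕ, n ≥ 1} (n + a²/(2nδ²)). Then for every fixed a > 0 and every sequence t_k → 0 with t_k ∈ (0,1), one has log μ_{t_k}({x : x > a√(log(1/t_k))}) / (−f(a) log(1/t_k)) → 1 as k → ∞. -/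
open MeasureTheory Filter Topology

/-- The Merton log-return law at time `t > 0` with parameters `μ, α ∈ ℝ`,
`σ, λ, δ > 0`: the mixture `e^{-λt} Σ_{n≥0} ((λt)^n/n!) · N(μt + nα, σ²t + nδ²)`. -/
noncomputable def mertonLaw (μ α σ lam δ t : ℝ) : Measure ℝ :=
  Measure.sum (fun n : ℕ =>
    (ENNReal.ofReal (Real.exp (-(lam * t)) * (lam * t) ^ n / (n.factorial : ℝ))) •
      ProbabilityTheory.gaussianReal (μ * t + n * α) ((σ ^ 2 * t + n * δ ^ 2).toNNReal))

open Real ProbabilityTheory NNReal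


lemma gauss_tail_upper (m c : ℝ) {v : ℝ≥0} (hv : v ≠ 0) (hmc : m ≤ c) :
    ((gaussianReal m v) (Set.Ioi c)).toReal ≤ Real.exp (-(c - m)^2 / (2 * v)) := by
  rw [gaussianReal_apply_eq_integral _ hv, ENNReal.toReal_ofReal
    (integral_nonneg (fun x => gaussianPDFReal_nonneg _ _ _))]
  have key : ∀ x ∈ Set.Ioi c, gaussianPDFReal m v x ≤
      Real.exp (-(c - m)^2 / (2 * v)) * gaussianPDFReal c v x := by
    intro x hx
    simp only [Set.mem_Ioi] at hx
    have hvpos : (0:ℝ) < v := lt_of_le_of_ne v.coe_nonneg (by exact_mod_cast hv.symm)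
    rw [gaussianPDFReal, gaussianPDFReal, mul_left_comm]
    refine mul_le_mul_of_nonneg_left ?_ (inv_nonneg.2 (Real.sqrt_nonneg _))
    rw [← Real.exp_add, Real.exp_le_exp, ← add_div]
    have hAE : -(x - m)^2 ≤ -(x - c)^2 + -(c - m)^2 := by nlinarith
    rw [div_le_div_iff₀ (by positivity) (by positivity)]
    nlinarith [mul_le_mul_of_nonneg_right hAE (by positivity : (0:ℝ) ≤ 2 * v)]
  calc ∫ x in Set.Ioi c, gaussianPDFReal m v x
      ≤ ∫ x in Set.Ioi c, Real.exp (-(c - m)^2 / (2 * v)) * gaussianPDFReal c v x := by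
        refine setIntegral_mono_on ((integrable_gaussianPDFReal _ _).restrict)
          (((integrable_gaussianPDFReal _ _).const_mul _).restrict) measurableSet_Ioi key
    _ = Real.exp (-(c - m)^2 / (2 * v)) * ∫ x in Set.Ioi c, gaussianPDFReal c v x := by
        rw [integral_const_mul]
    _ ≤ Real.exp (-(c - m)^2 / (2 * v)) * 1 := by
        gcongr
        rw [← integral_gaussianPDFReal_eq_one c hv]
        exact setIntegral_le_integral (integrable_gaussianPDFReal _ _)
          (ae_of_all _ (gaussianPDFReal_nonneg _ _))
    _ = _ := mul_one _

lemma gauss_tail_lower (m c : ℝ) {v : ℝ≥0} (hv : v ≠ 0) (hmc : m ≤ c) :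
    Real.exp (-(c + Real.sqrt v - m)^2 / (2 * v)) / Real.sqrt (2 * π) ≤
      ((gaussianReal m v) (Set.Ioi c)).toReal := by
  have hvpos : (0:ℝ) < v := lt_of_le_of_ne v.coe_nonneg (by exact_mod_cast hv.symm)
  have hsv : (0:ℝ) < Real.sqrt v := Real.sqrt_pos.2 hvpos
  have h1 : ((gaussianReal m v) (Set.Ioc c (c + Real.sqrt v))).toReal ≤
      ((gaussianReal m v) (Set.Ioi c)).toReal :=
    ENNReal.toReal_mono (measure_ne_top _ _) (measure_mono Set.Ioc_subset_Ioi_self)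
  refine le_trans ?_ h1
  rw [gaussianReal_apply_eq_integral _ hv, ENNReal.toReal_ofReal
    (integral_nonneg fun x => gaussianPDFReal_nonneg _ _ _)]
  have key : ∀ x ∈ Set.Ioc c (c + Real.sqrt v),
      gaussianPDFReal m v (c + Real.sqrt v) ≤ gaussianPDFReal m v x := by
    intro x hx
    obtain ⟨hx1, hx2⟩ := hx
    rw [gaussianPDFReal, gaussianPDFReal]
    refine mul_le_mul_of_nonneg_left ?_ (inv_nonneg.2 (Real.sqrt_nonneg _))
    rw [Real.exp_le_exp, div_le_div_iff₀ (by positivity) (by positivity)]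
    have h3 : (x - m)^2 ≤ (c + Real.sqrt v - m)^2 := by nlinarith
    nlinarith [mul_le_mul_of_nonneg_right h3 (by positivity : (0:ℝ) ≤ 2 * v)]
  have hsqrt : Real.sqrt (2 * π * v) = Real.sqrt (2 * π) * Real.sqrt v :=
    Real.sqrt_mul (by positivity) _
  calc rexp (-(c + Real.sqrt v - m)^2 / (2*v)) / Real.sqrt (2*π)
      = (volume (Set.Ioc c (c + Real.sqrt v))).toReal • gaussianPDFReal m v (c + Real.sqrt v) := by
        rw [Real.volume_Ioc, add_sub_cancel_left, ENNReal.toReal_ofReal hsv.le, smul_eq_mul,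
          gaussianPDFReal, hsqrt]
        have h2π : (0:ℝ) < Real.sqrt (2 * π) := Real.sqrt_pos.2 (by positivity)
        field_simp
    _ = ∫ _x in Set.Ioc c (c + Real.sqrt v), gaussianPDFReal m v (c + Real.sqrt v) :=
        (setIntegral_const _).symm
    _ ≤ ∫ x in Set.Ioc c (c + Real.sqrt v), gaussianPDFReal m v x :=
        setIntegral_mono_on (integrableOn_const measure_Ioc_lt_top.ne)
          ((integrable_gaussianPDFReal _ _).restrict) measurableSet_Ioc key


lemma mertonLaw_apply_toReal (μ α σ lam δ t : ℝ) (hlt : 0 ≤ lam * t) {s : Set ℝ} (hs : MeasurableSet s) :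
    ((mertonLaw μ α σ lam δ t) s).toReal =
      ∑' n : ℕ, (Real.exp (-(lam * t)) * (lam * t) ^ n / (n.factorial : ℝ)) *
        ((gaussianReal (μ * t + n * α) ((σ ^ 2 * t + n * δ ^ 2).toNNReal)) s).toReal := by
  rw [mertonLaw, Measure.sum_apply _ hs, ENNReal.tsum_toReal_eq]
  · refine tsum_congr fun n => ?_
    rw [Measure.smul_apply, smul_eq_mul, ENNReal.toReal_mul, ENNReal.toReal_ofReal]
    exact div_nonneg (mul_nonneg (Real.exp_nonneg _) (pow_nonneg hlt n)) (Nat.cast_nonneg _)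
  · intro n
    rw [Measure.smul_apply, smul_eq_mul]
    exact ENNReal.mul_ne_top ENNReal.ofReal_ne_top (measure_ne_top _ _)

lemma sqrtL_atTop {L : ℕ → ℝ} (hL : Tendsto L atTop atTop) :
    Tendsto (fun k => Real.sqrt (L k)) atTop atTop := by
  have hsq : Tendsto Real.sqrt atTop atTop := by
    refine tendsto_atTop_atTop.2 fun b => ⟨b^2, fun x hx => ?_⟩
    calc b ≤ |b| := le_abs_self b
      _ = Real.sqrt (b^2) := (Real.sqrt_sq_eq_abs b).symm
      _ ≤ Real.sqrt x := Real.sqrt_le_sqrt hx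
  exact hsq.comp hL

lemma aux_eq {a e v : ℝ} {Lk : ℝ} (hLk : 0 < Lk) :
    (a + e / Real.sqrt Lk)^2 / (2 * v) = (a * Real.sqrt Lk + e)^2 / (2 * v * Lk) := by
  have hs : Real.sqrt Lk ≠ 0 := ne_of_gt (Real.sqrt_pos.2 hLk)
  have key : a + e / Real.sqrt Lk = (a * Real.sqrt Lk + e) / Real.sqrt Lk := by
    field_simp
  rw [key, div_pow, Real.sq_sqrt hLk.le, div_div]
  ring_nf

lemma tends_aux {L v e : ℕ → ℝ} {a w E : ℝ} (hL : Tendsto L atTop atTop)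
    (hLpos : ∀ k, 0 < L k) (hv : Tendsto v atTop (𝓝 w)) (hw : 0 < w)
    (he : Tendsto e atTop (𝓝 E)) :
    Tendsto (fun k => (a * Real.sqrt (L k) + e k)^2 / (2 * v k * L k)) atTop
      (𝓝 (a^2 / (2 * w))) := by
  have h1 : Tendsto (fun k => e k / Real.sqrt (L k)) atTop (𝓝 0) :=
    he.div_atTop (sqrtL_atTop hL)
  have hnum : Tendsto (fun k => (a + e k / Real.sqrt (L k))^2) atTop (𝓝 (a^2)) := by
    have h2 := ((tendsto_const_nhds (x := a)).add h1).pow 2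
    simpa using h2
  have hden : Tendsto (fun k => 2 * v k) atTop (𝓝 (2*w)) := hv.const_mul 2
  have h2 := hnum.div hden (by positivity)
  exact h2.congr fun k => aux_eq (hLpos k)

lemma tends_aux_top {L v e : ℕ → ℝ} {a E : ℝ} (hL : Tendsto L atTop atTop)
    (hLpos : ∀ k, 0 < L k) (hv : Tendsto v atTop (𝓝 0)) (hvpos : ∀ k, 0 < v k)
    (ha : 0 < a) (he : Tendsto e atTop (𝓝 E)) :
    Tendsto (fun k => (a * Real.sqrt (L k) + e k)^2 / (2 * v k * L k)) atTop atTop := by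
  have h1 : Tendsto (fun k => e k / Real.sqrt (L k)) atTop (𝓝 0) :=
    he.div_atTop (sqrtL_atTop hL)
  have hnum : Tendsto (fun k => (a + e k / Real.sqrt (L k))^2) atTop (𝓝 (a^2)) := by
    have h2 := ((tendsto_const_nhds (x := a)).add h1).pow 2
    simpa using h2
  have hvin : Tendsto (fun k => 2 * v k) atTop (𝓝[>] (0:ℝ)) := by
    refine tendsto_nhdsWithin_of_tendsto_nhds_of_eventually_within _ ?_
      (Eventually.of_forall fun k => by
        have := hvpos k
        simp only [Set.mem_Ioi]
        positivity)
    simpa using hv.const_mul 2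
  have hinv : Tendsto (fun k => (2 * v k)⁻¹) atTop atTop :=
    tendsto_inv_nhdsGT_zero.comp hvin
  have h2 : Tendsto (fun k => (a + e k / Real.sqrt (L k))^2 * (2 * v k)⁻¹) atTop atTop :=
    hnum.pos_mul_atTop (by positivity) hinv
  refine h2.congr' ?_
  filter_upwards [] with k
  rw [← div_eq_mul_inv]
  exact aux_eq (hLpos k)


set_option maxHeartbeats 2000000 in
/-- **Merton model, tail asymptotics at scale `κ = a √(log(1/t))`.**
For `f(a) = min_{n ≥ 1} (n + a²/(2nδ²))` and any fixed `a > 0`, along any sequence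
`t_k → 0` with `t_k ∈ (0,1)`, one has
`log μ_{t_k}(x > a √(log(1/t_k))) ~ -f(a) log(1/t_k)`. -/
theorem merton_tail_scale_sqrt_log
    (μ α σ lam δ : ℝ) (hσ : 0 < σ) (hlam : 0 < lam) (hδ : 0 < δ)
    (f : ℝ → ℝ)
    (hf : ∀ a : ℝ, f a = ⨅ n : ℕ, ((n : ℝ) + 1 + a ^ 2 / (2 * ((n : ℝ) + 1) * δ ^ 2)))
    (a : ℝ) (ha : 0 < a)
    (t : ℕ → ℝ) (ht : ∀ k, 0 < t k ∧ t k < 1)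
    (ht0 : Tendsto t atTop (𝓝 0)) :
    Tendsto (fun k =>
        Real.log (((mertonLaw μ α σ lam δ (t k))
            {x : ℝ | a * Real.sqrt (Real.log (1 / t k)) < x}).toReal) /
          (-(f a) * Real.log (1 / t k)))
      atTop (𝓝 1) := by
  have htpos : ∀ k, 0 < t k := fun k => (ht k).1
  have htlt : ∀ k, t k < 1 := fun k => (ht k).2
  set L : ℕ → ℝ := fun k => Real.log (1 / t k) with hLdef
  have hLpos : ∀ k, 0 < L k := fun k => by
    apply Real.log_pos
    rw [lt_div_iff₀ (htpos k), one_mul]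
    exact htlt k
  have htin : Tendsto t atTop (𝓝[>] (0:ℝ)) :=
    tendsto_nhdsWithin_of_tendsto_nhds_of_eventually_within _ ht0
      (Eventually.of_forall htpos)
  have hLtop : Tendsto L atTop atTop := by
    have h1 : Tendsto (fun k => Real.log (t k)) atTop atBot :=
      Real.tendsto_log_nhdsGT_zero.comp htin
    have h2 : Tendsto (fun k => -Real.log (t k)) atTop atTop :=
      tendsto_neg_atBot_atTop.comp h1
    refine h2.congr fun k => ?_
    simp only [hLdef, one_div, Real.log_inv]
  -- the minimizer
  set g : ℕ → ℝ := fun n => (n:ℝ) + 1 + a^2 / (2 * ((n:ℝ)+1) * δ^2) with hgdef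
  have hgpos : ∀ n : ℕ, (n:ℝ) + 1 ≤ g n := fun n => by
    have : 0 < a^2 / (2 * ((n:ℝ)+1) * δ^2) := by positivity
    simp only [hgdef]; linarith
  obtain ⟨n₀, hn₀⟩ : ∃ n₀ : ℕ, ∀ n : ℕ, g n₀ ≤ g n := by
    obtain ⟨n₀, hn₀mem, hn₀⟩ := Finset.exists_min_image (Finset.range (⌈g 0⌉₊ + 1)) g
      ⟨0, Finset.mem_range.2 (Nat.succ_pos _)⟩
    refine ⟨n₀, fun n => ?_⟩
    by_cases hn : n ∈ Finset.range (⌈g 0⌉₊ + 1)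
    · exact hn₀ n hn
    · have hn' : (⌈g 0⌉₊ + 1 : ℕ) ≤ n := by
        simpa [Finset.mem_range, not_lt] using hn
      have h0 : g n₀ ≤ g 0 := hn₀ 0 (Finset.mem_range.2 (Nat.succ_pos _))
      refine h0.trans ?_
      have := Nat.le_ceil (g 0)
      have hcast : ((⌈g 0⌉₊ + 1 : ℕ) : ℝ) ≤ (n:ℝ) := by exact_mod_cast hn'
      have := hgpos n
      push_cast at hcast
      linarith [Nat.le_ceil (g 0)]
  have hbdd : BddBelow (Set.range g) := ⟨1, by
    rintro x ⟨n, rfl⟩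
    have h2 := Nat.cast_nonneg (α := ℝ) n
    linarith [hgpos n]⟩
  have hfa : f a = g n₀ := by
    rw [hf a]
    refine le_antisymm (ciInf_le hbdd n₀) (le_ciInf fun n => hn₀ n)
  have hfa1 : 1 ≤ f a := by
    rw [hfa]
    have h2 := Nat.cast_nonneg (α := ℝ) n₀
    linarith [hgpos n₀]
  have hfapos : 0 < f a := lt_of_lt_of_le one_pos hfa1
  have hlogt : ∀ k, Real.log (t k) = -L k := fun k => by
    simp [hLdef, one_div, Real.log_inv]
  have htexp : ∀ k, t k = Real.exp (-(L k)) := fun k => by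
    rw [← hlogt k, Real.exp_log (htpos k)]
  have hctop : Tendsto (fun k => a * Real.sqrt (L k)) atTop atTop :=
    (sqrtL_atTop hLtop).const_mul_atTop ha
  set m : ℕ := n₀ + 1 with hmdef
  have hmcast : ((m:ℕ):ℝ) = (n₀:ℝ) + 1 := by rw [hmdef]; push_cast; ring
  set N : ℕ := ⌈f a⌉₊ with hNdef
  have hfaN : f a ≤ (N:ℝ) := Nat.le_ceil _
  have hmN : m ≤ N := by
    have h1 : (m:ℝ) ≤ f a := by rw [hfa, hmcast]; exact hgpos n₀
    have h2 : (m:ℝ) ≤ (N:ℝ) := h1.trans hfaN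
    exact_mod_cast h2
  set B : ℝ := |μ| + (N:ℝ) * |α| with hBdef
  have hmean_le_B : ∀ n : ℕ, n ≤ N → ∀ k, μ * t k + (n:ℝ) * α ≤ B := by
    intro n hn k
    have h1 : μ * t k ≤ |μ| := by
      nlinarith [le_abs_self μ, neg_abs_le μ, abs_nonneg μ, htpos k, htlt k]
    have h2 : (n:ℝ) * α ≤ (n:ℝ) * |α| := by
      have h3 := le_abs_self α
      have h4 := Nat.cast_nonneg (α := ℝ) n
      nlinarith
    have h3 : (n:ℝ) * |α| ≤ (N:ℝ) * |α| := by
      have h5 : (n:ℝ) ≤ (N:ℝ) := by exact_mod_cast hn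
      nlinarith [abs_nonneg α]
    rw [hBdef]; linarith
  have hVpos : ∀ (n : ℕ) (k : ℕ), 0 < σ^2 * t k + (n:ℝ) * δ^2 := fun n k =>
    add_pos_of_pos_of_nonneg (mul_pos (pow_pos hσ 2) (htpos k)) (by positivity)
  have hVne : ∀ (n : ℕ) (k : ℕ), ((σ^2 * t k + (n:ℝ) * δ^2).toNNReal) ≠ 0 := fun n k => by
    simp only [ne_eq, Real.toNNReal_eq_zero, not_le]
    exact hVpos n k
  have hVcoe : ∀ (n : ℕ) (k : ℕ),
      (((σ^2 * t k + (n:ℝ) * δ^2).toNNReal : ℝ≥0) : ℝ) = σ^2 * t k + (n:ℝ) * δ^2 :=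
    fun n k => Real.coe_toNNReal _ (hVpos n k).le
  have hVtends : ∀ n : ℕ, Tendsto (fun k => σ^2 * t k + (n:ℝ) * δ^2) atTop (𝓝 ((n:ℝ) * δ^2)) := by
    intro n
    have h1 := (ht0.const_mul (σ^2)).add_const ((n:ℝ) * δ^2)
    simpa using h1
  set p : ℕ → ℕ → ℝ := fun n k =>
    (Real.exp (-(lam * t k)) * (lam * t k) ^ n / (n.factorial : ℝ)) *
      ((gaussianReal (μ * t k + n * α) ((σ ^ 2 * t k + n * δ ^ 2).toNNReal))
        (Set.Ioi (a * Real.sqrt (L k)))).toReal with hpdef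
  set S : ℕ → ℝ := fun k =>
    ((mertonLaw μ α σ lam δ (t k)) (Set.Ioi (a * Real.sqrt (L k)))).toReal with hSdef
  have hSeq : ∀ k, S k = ∑' n, p n k := fun k =>
    mertonLaw_apply_toReal μ α σ lam δ (t k) (mul_pos hlam (htpos k)).le measurableSet_Ioi
  have hGle1 : ∀ (mm : ℝ) (v : ℝ≥0) (x : ℝ), ((gaussianReal mm v) (Set.Ioi x)).toReal ≤ 1 := by
    intro mm v x
    have h := prob_le_one (μ := gaussianReal mm v) (s := Set.Ioi x)
    have h2 := ENNReal.toReal_mono (by norm_num) h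
    simpa using h2
  have hwnonneg : ∀ (n : ℕ) (k : ℕ),
      0 ≤ Real.exp (-(lam * t k)) * (lam * t k) ^ n / (n.factorial : ℝ) := fun n k => by
    have h1 := (mul_pos hlam (htpos k)).le
    positivity
  have hpnonneg : ∀ n k, 0 ≤ p n k := fun n k =>
    mul_nonneg (hwnonneg n k) ENNReal.toReal_nonneg
  have hple : ∀ n k, p n k ≤ Real.exp (-(lam * t k)) * (lam * t k) ^ n / (n.factorial : ℝ) := by
    intro n k
    calc p n k ≤ (Real.exp (-(lam * t k)) * (lam * t k) ^ n / (n.factorial : ℝ)) * 1 :=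
          mul_le_mul_of_nonneg_left (hGle1 _ _ _) (hwnonneg n k)
      _ = _ := mul_one _
  have hwsummable : ∀ k, Summable (fun n : ℕ =>
      Real.exp (-(lam * t k)) * (lam * t k) ^ n / (n.factorial : ℝ)) := fun k => by
    have h1 := (Real.summable_pow_div_factorial (lam * t k)).mul_left (Real.exp (-(lam * t k)))
    refine h1.congr fun n => ?_
    rw [mul_div_assoc]
  have hpsummable : ∀ k, Summable (fun n => p n k) := fun k =>
    Summable.of_nonneg_of_le (fun n => hpnonneg n k) (fun n => hple n k) (hwsummable k)
  set Q : ℕ → ℝ := fun k =>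
    (a * Real.sqrt (L k) +
        (Real.sqrt (σ^2 * t k + (m:ℝ) * δ^2) - (μ * t k + (m:ℝ) * α)))^2 /
      (2 * (σ^2 * t k + (m:ℝ) * δ^2)) with hQdef
  set ub : ℕ → ℝ := fun k => lam * t k + (-((m:ℝ) * Real.log lam)) + (m:ℝ) * L k +
      Real.log (m.factorial : ℝ) + Q k + Real.log (Real.sqrt (2 * Real.pi)) with hubdef
  set lb : ℕ → ℝ := fun k =>
    (Real.exp (-(lam * t k)) * (lam * t k) ^ m / (m.factorial : ℝ)) *
      (Real.exp (-(Q k)) / Real.sqrt (2 * Real.pi)) with hlbdef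
  have hlbpos : ∀ k, 0 < lb k := fun k => by
    have h1 : 0 < lam * t k := mul_pos hlam (htpos k)
    have h2 : (0:ℝ) < (m.factorial : ℝ) := by exact_mod_cast m.factorial_pos
    have h3 : (0:ℝ) < Real.sqrt (2 * Real.pi) := Real.sqrt_pos.2 (by positivity)
    rw [hlbdef]
    positivity
  have hE1 : ∀ᶠ k in atTop, B ≤ a * Real.sqrt (L k) := hctop.eventually_ge_atTop B
  have hSlb : ∀ᶠ k in atTop, lb k ≤ S k := by
    filter_upwards [hE1] with k hk
    have hmean : μ * t k + (m:ℝ) * α ≤ a * Real.sqrt (L k) :=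
      (hmean_le_B m hmN k).trans hk
    have hg := gauss_tail_lower (μ * t k + (m:ℝ) * α) (a * Real.sqrt (L k)) (hVne m k) hmean
    rw [hVcoe m k] at hg
    have hQeq : Real.exp (-(a * Real.sqrt (L k) + Real.sqrt (σ^2 * t k + (m:ℝ) * δ^2) -
        (μ * t k + (m:ℝ) * α))^2 / (2 * (σ^2 * t k + (m:ℝ) * δ^2))) = Real.exp (-(Q k)) := by
      rw [hQdef]
      congr 1
      ring
    rw [hQeq] at hg
    have h1 : lb k ≤ p m k := by
      rw [hlbdef, hpdef]
      exact mul_le_mul_of_nonneg_left hg (hwnonneg m k)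
    refine h1.trans ?_
    rw [hSeq k]
    exact (hpsummable k).le_tsum m fun j _ => hpnonneg j k
  have hSpos : ∀ᶠ k in atTop, 0 < S k := by
    filter_upwards [hSlb] with k hk
    exact lt_of_lt_of_le (hlbpos k) hk
  have hlogeq : ∀ k, Real.log (lb k) = -(ub k) := by
    intro k
    have h1 : (0:ℝ) < lam * t k := mul_pos hlam (htpos k)
    have h2 : Real.sqrt (2 * Real.pi) ≠ 0 := ne_of_gt (Real.sqrt_pos.2 (by positivity))
    have h3 : ((m.factorial : ℝ)) ≠ 0 := by
      exact_mod_cast m.factorial_pos.ne'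
    rw [hlbdef, hubdef]
    simp only []
    rw [Real.log_mul (by positivity) (by positivity),
      Real.log_div (by positivity) h3,
      Real.log_mul (Real.exp_ne_zero _) (by positivity),
      Real.log_exp, Real.log_pow,
      Real.log_mul hlam.ne' (htpos k).ne', hlogt k,
      Real.log_div (Real.exp_ne_zero _) h2, Real.log_exp]
    ring
  have huub : ∀ᶠ k in atTop, -Real.log (S k) / L k ≤ ub k / L k := by
    filter_upwards [hSlb] with k hk
    have hlog : Real.log (lb k) ≤ Real.log (S k) := Real.log_le_log (hlbpos k) hk
    rw [hlogeq k] at hlog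
    have h4 : -Real.log (S k) ≤ ub k := by linarith
    exact (div_le_div_iff_of_pos_right (hLpos k)).2 h4
  have hQtends : Tendsto (fun k => Q k / L k) atTop (𝓝 (a^2 / (2 * ((m:ℝ) * δ^2)))) := by
    have hmpos : (0:ℝ) < (m:ℝ) * δ^2 := by
      rw [hmcast]; positivity
    have hetends : Tendsto (fun k => Real.sqrt (σ^2 * t k + (m:ℝ) * δ^2) - (μ * t k + (m:ℝ) * α))
        atTop (𝓝 (Real.sqrt ((m:ℝ) * δ^2) - (m:ℝ) * α)) := by
      have h1 := (hVtends m).sqrt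
      have h2 : Tendsto (fun k => μ * t k + (m:ℝ) * α) atTop (𝓝 ((m:ℝ) * α)) := by
        have h3 := (ht0.const_mul μ).add_const ((m:ℝ) * α)
        simpa using h3
      exact h1.sub h2
    have h3 := tends_aux (a := a) hLtop hLpos (hVtends m) hmpos hetends
    refine h3.congr fun k => ?_
    rw [hQdef]
    simp only []
    rw [div_div]
  have hubL : Tendsto (fun k => ub k / L k) atTop (𝓝 (f a)) := by
    have t1 : Tendsto (fun k => lam * t k / L k) atTop (𝓝 0) := by
      have h1 : Tendsto (fun k => lam * t k) atTop (𝓝 0) := by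
        have h2 := ht0.const_mul lam; simpa using h2
      exact h1.div_atTop hLtop
    have t2 : Tendsto (fun k => (-((m:ℝ) * Real.log lam)) / L k) atTop (𝓝 0) :=
      tendsto_const_nhds.div_atTop hLtop
    have t3 : Tendsto (fun k => (m:ℝ) * L k / L k) atTop (𝓝 ((m:ℝ))) := by
      refine tendsto_const_nhds.congr fun k => ?_
      rw [mul_div_assoc, div_self (hLpos k).ne', mul_one]
    have t4 : Tendsto (fun k => Real.log (m.factorial : ℝ) / L k) atTop (𝓝 0) :=
      tendsto_const_nhds.div_atTop hLtop
    have t6 : Tendsto (fun k => Real.log (Real.sqrt (2 * Real.pi)) / L k) atTop (𝓝 0) :=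
      tendsto_const_nhds.div_atTop hLtop
    have hsum := ((((t1.add t2).add t3).add t4).add hQtends).add t6
    have hval : (0 + 0 + (m:ℝ) + 0 + a^2 / (2 * ((m:ℝ) * δ^2)) + 0) = f a := by
      rw [hfa, hmcast]
      simp only [hgdef]
      ring
    rw [hval] at hsum
    refine hsum.congr fun k => ?_
    rw [hubdef]
    simp only []
    rw [add_div, add_div, add_div, add_div, add_div]
  have hmain : Tendsto (fun k => -Real.log (S k) / L k) atTop (𝓝 (f a)) := by
    refine tendsto_order.2 ⟨?_, ?_⟩
    · intro b hb
      set ε : ℝ := (f a - b) / 2 with hεdef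
      have hε : 0 < ε := by rw [hεdef]; linarith
      have hb2 : f a - 2 * ε = b := by rw [hεdef]; ring
      set C : ℝ := ∑' n : ℕ, lam ^ n / (n.factorial : ℝ) with hCdef
      have hCnn : 0 ≤ C := tsum_nonneg fun n => by positivity
      set D : ℝ := (∑ n ∈ Finset.range (N+1), lam ^ n) + lam ^ (N+1) * C with hDdef
      have hD1 : 1 ≤ D := by
        have h1 : (1:ℝ) ≤ ∑ n ∈ Finset.range (N+1), lam ^ n := by
          have h2 : (fun n => lam ^ n) 0 ≤ ∑ n ∈ Finset.range (N+1), lam ^ n :=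
            Finset.single_le_sum (f := fun n => lam ^ n) (fun i _ => by positivity)
              (Finset.mem_range.2 (Nat.succ_pos _))
          simpa using h2
        nlinarith [pow_nonneg hlam.le (N+1), mul_nonneg (pow_nonneg hlam.le (N+1)) hCnn]
      have hDpos : 0 < D := lt_of_lt_of_le one_pos hD1
      have hrel : ∀ (n : ℕ) (k : ℕ),
          (a * Real.sqrt (L k) + (-(μ * t k + (n:ℝ) * α)))^2 /
            (2 * (σ^2 * t k + (n:ℝ) * δ^2) * L k) * L k =
          (a * Real.sqrt (L k) - (μ * t k + (n:ℝ) * α))^2 /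
            (2 * (σ^2 * t k + (n:ℝ) * δ^2)) := by
        intro n k
        have h1 := (hVpos n k).ne'
        have h2 := (hLpos k).ne'
        field_simp
        ring
      have hHead : ∀ n ∈ Finset.range (N+1), ∀ᶠ k in atTop,
          p n k ≤ lam ^ n * Real.exp (-(f a - ε) * L k) := by
        intro n hn
        have hnN : n ≤ N := Nat.lt_succ_iff.1 (Finset.mem_range.1 hn)
        have hmean2 : Tendsto (fun k => -(μ * t k + (n:ℝ) * α)) atTop (𝓝 (-((n:ℝ) * α))) := by
          have h3 := ((ht0.const_mul μ).add_const ((n:ℝ) * α)).neg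
          simpa using h3
        rcases Nat.eq_zero_or_pos n with rfl | hn1
        · -- n = 0 component
          have hT0 : Tendsto (fun k => (a * Real.sqrt (L k) + (-(μ * t k + ((0:ℕ):ℝ) * α)))^2 /
              (2 * (σ^2 * t k + ((0:ℕ):ℝ) * δ^2) * L k)) atTop atTop := by
            refine tends_aux_top hLtop hLpos ?_ (fun k => hVpos 0 k) ha hmean2
            have h4 := hVtends 0
            simpa using h4
          filter_upwards [hE1, hT0.eventually_ge_atTop (f a)] with k hk1 hk2
          have hmean : μ * t k + ((0:ℕ):ℝ) * α ≤ a * Real.sqrt (L k) :=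
            (hmean_le_B 0 (Nat.zero_le _) k).trans hk1
          have hg := gauss_tail_upper (μ * t k + ((0:ℕ):ℝ) * α) (a * Real.sqrt (L k))
            (hVne 0 k) hmean
          rw [hVcoe 0 k] at hg
          have hw1 : Real.exp (-(lam * t k)) * (lam * t k) ^ 0 / ((Nat.factorial 0 : ℕ):ℝ) ≤ 1 := by
            simp only [pow_zero, Nat.factorial_zero, Nat.cast_one, mul_one, div_one]
            rw [Real.exp_le_one_iff]
            nlinarith [mul_pos hlam (htpos k)]
          have h5 : p 0 k ≤ Real.exp (-(a * Real.sqrt (L k) - (μ * t k + ((0:ℕ):ℝ) * α))^2 /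
              (2 * (σ^2 * t k + ((0:ℕ):ℝ) * δ^2))) := by
            calc p 0 k ≤ (Real.exp (-(lam * t k)) * (lam * t k) ^ 0 / ((Nat.factorial 0 : ℕ):ℝ)) *
                  Real.exp (-(a * Real.sqrt (L k) - (μ * t k + ((0:ℕ):ℝ) * α))^2 /
                    (2 * (σ^2 * t k + ((0:ℕ):ℝ) * δ^2))) :=
                  mul_le_mul_of_nonneg_left hg (hwnonneg 0 k)
              _ ≤ 1 * Real.exp (-(a * Real.sqrt (L k) - (μ * t k + ((0:ℕ):ℝ) * α))^2 /
                    (2 * (σ^2 * t k + ((0:ℕ):ℝ) * δ^2))) :=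
                  mul_le_mul_of_nonneg_right hw1 (Real.exp_nonneg _)
              _ = _ := one_mul _
          refine h5.trans ?_
          rw [pow_zero, one_mul, Real.exp_le_exp]
          have h6 := hrel 0 k
          have h7 : (f a) * L k ≤ (a * Real.sqrt (L k) - (μ * t k + ((0:ℕ):ℝ) * α))^2 /
              (2 * (σ^2 * t k + ((0:ℕ):ℝ) * δ^2)) := by
            rw [← h6]
            exact mul_le_mul_of_nonneg_right hk2 (hLpos k).le
          rw [neg_div]
          linarith [h7, mul_pos hε (hLpos k)]
        · -- n ≥ 1 component
          obtain ⟨j, rfl⟩ : ∃ j, n = j + 1 := ⟨n - 1, (Nat.succ_pred_eq_of_pos hn1).symm⟩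
          have hnpos : (0:ℝ) < ((j+1:ℕ):ℝ) * δ^2 := by push_cast; positivity
          have hTn := tends_aux (a := a) hLtop hLpos (hVtends (j+1)) hnpos hmean2
          have hTev := hTn.eventually (lt_mem_nhds
            (show a^2/(2*(((j+1:ℕ):ℝ) * δ^2)) - ε < a^2/(2*(((j+1:ℕ):ℝ) * δ^2)) by linarith))
          filter_upwards [hE1, hTev] with k hk1 hk2
          have hmean : μ * t k + ((j+1:ℕ):ℝ) * α ≤ a * Real.sqrt (L k) :=
            (hmean_le_B (j+1) hnN k).trans hk1
          have hg := gauss_tail_upper (μ * t k + ((j+1:ℕ):ℝ) * α) (a * Real.sqrt (L k))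
            (hVne (j+1) k) hmean
          rw [hVcoe (j+1) k] at hg
          have hlt := mul_pos hlam (htpos k)
          have hw6 : Real.exp (-(lam * t k)) * (lam * t k) ^ (j+1) / (((j+1).factorial : ℕ):ℝ) ≤
              (lam * t k) ^ (j+1) := by
            have e1 : Real.exp (-(lam * t k)) ≤ 1 := by
              rw [Real.exp_le_one_iff]; nlinarith
            have f1 : (1:ℝ) ≤ (((j+1).factorial : ℕ):ℝ) := by
              exact_mod_cast (j+1).factorial_pos
            calc Real.exp (-(lam * t k)) * (lam * t k) ^ (j+1) / (((j+1).factorial : ℕ):ℝ)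
                ≤ Real.exp (-(lam * t k)) * (lam * t k) ^ (j+1) :=
                  div_le_self (mul_nonneg (Real.exp_nonneg _) (pow_nonneg hlt.le _)) f1
              _ ≤ (lam * t k) ^ (j+1) := mul_le_of_le_one_left (pow_nonneg hlt.le _) e1
          have hpow : (lam * t k) ^ (j+1) = lam ^ (j+1) * Real.exp (-(((j+1:ℕ):ℝ)) * L k) := by
            rw [mul_pow, htexp k, ← Real.exp_nat_mul]
            congr 2
            push_cast
            ring
          have h5 : p (j+1) k ≤ lam ^ (j+1) * Real.exp (-(((j+1:ℕ):ℝ)) * L k) *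
              Real.exp (-(a * Real.sqrt (L k) - (μ * t k + ((j+1:ℕ):ℝ) * α))^2 /
                (2 * (σ^2 * t k + ((j+1:ℕ):ℝ) * δ^2))) := by
            calc p (j+1) k ≤ (Real.exp (-(lam * t k)) * (lam * t k) ^ (j+1) /
                  (((j+1).factorial : ℕ):ℝ)) *
                  Real.exp (-(a * Real.sqrt (L k) - (μ * t k + ((j+1:ℕ):ℝ) * α))^2 /
                    (2 * (σ^2 * t k + ((j+1:ℕ):ℝ) * δ^2))) :=
                  mul_le_mul_of_nonneg_left hg (hwnonneg (j+1) k)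
              _ ≤ (lam * t k) ^ (j+1) *
                  Real.exp (-(a * Real.sqrt (L k) - (μ * t k + ((j+1:ℕ):ℝ) * α))^2 /
                    (2 * (σ^2 * t k + ((j+1:ℕ):ℝ) * δ^2))) :=
                  mul_le_mul_of_nonneg_right hw6 (Real.exp_nonneg _)
              _ = _ := by rw [hpow]
          refine h5.trans ?_
          rw [mul_assoc, ← Real.exp_add]
          refine mul_le_mul_of_nonneg_left ?_ (pow_nonneg hlam.le _)
          rw [Real.exp_le_exp]
          have h6 := hrel (j+1) k
          have h7 : (a^2/(2*(((j+1:ℕ):ℝ) * δ^2)) - ε) * L k ≤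
              (a * Real.sqrt (L k) - (μ * t k + ((j+1:ℕ):ℝ) * α))^2 /
                (2 * (σ^2 * t k + ((j+1:ℕ):ℝ) * δ^2)) := by
            rw [← h6]
            exact mul_le_mul_of_nonneg_right hk2.le (hLpos k).le
          have h8 : f a ≤ ((j+1:ℕ):ℝ) + a^2/(2*(((j+1:ℕ):ℝ) * δ^2)) := by
            have h9 := hn₀ j
            rw [← hfa] at h9
            refine h9.trans ?_
            rw [hgdef]
            push_cast
            have : 2 * ((j:ℝ) + 1) * δ ^ 2 = 2 * (((j:ℝ) + 1) * δ ^ 2) := by ring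
            rw [this]
          rw [neg_div]
          linarith [h7, mul_le_mul_of_nonneg_right h8 (hLpos k).le, mul_pos hε (hLpos k)]
      have hHeadAll : ∀ᶠ k in atTop, ∀ n ∈ Finset.range (N+1),
          p n k ≤ lam ^ n * Real.exp (-(f a - ε) * L k) :=
        (eventually_all_finset _).2 hHead
      have hSub : ∀ᶠ k in atTop, S k ≤ D * Real.exp (-(f a - ε) * L k) := by
        filter_upwards [hHeadAll] with k hk
        have hsplit := Summable.sum_add_tsum_nat_add (f := fun n => p n k) (N+1) (hpsummable k)
        have hhead : (∑ n ∈ Finset.range (N+1), p n k) ≤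
            (∑ n ∈ Finset.range (N+1), lam ^ n) * Real.exp (-(f a - ε) * L k) := by
          rw [Finset.sum_mul]
          exact Finset.sum_le_sum hk
        have hlt := mul_pos hlam (htpos k)
        have hb1 : ∀ n : ℕ, p (n + (N+1)) k ≤ (lam * t k)^(N+1) * (lam^n / (n.factorial : ℝ)) := by
          intro n
          have e1 : Real.exp (-(lam * t k)) ≤ 1 := by
            rw [Real.exp_le_one_iff]; nlinarith
          have f1 : ((n.factorial : ℕ):ℝ) ≤ (((n+(N+1)).factorial : ℕ):ℝ) := by
            exact_mod_cast Nat.factorial_le (Nat.le_add_right n (N+1))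
          have f2 : (0:ℝ) < ((n.factorial : ℕ):ℝ) := by exact_mod_cast n.factorial_pos
          calc p (n + (N+1)) k
              ≤ Real.exp (-(lam * t k)) * (lam * t k) ^ (n+(N+1)) /
                  (((n+(N+1)).factorial : ℕ):ℝ) := hple _ k
            _ ≤ 1 * (lam * t k) ^ (n+(N+1)) / ((n.factorial : ℕ):ℝ) := by
                gcongr <;> first
                  | exact pow_nonneg hlt.le _
                  | exact e1
                  | exact f1
            _ = (lam * t k)^(N+1) * ((lam * t k)^n / (n.factorial : ℝ)) := by
                rw [one_mul, pow_add]
                ring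
            _ ≤ (lam * t k)^(N+1) * (lam^n / (n.factorial : ℝ)) := by
                gcongr <;> first
                  | exact hlt.le
                  | nlinarith [htlt k]
        have hsum1 : Summable (fun n : ℕ => p (n + (N+1)) k) :=
          (_root_.summable_nat_add_iff (N+1)).2 (hpsummable k)
        have hsum2 : Summable (fun n : ℕ => (lam * t k)^(N+1) * (lam^n / (n.factorial:ℝ))) :=
          (Real.summable_pow_div_factorial lam).mul_left _
        have htail0 := Summable.tsum_le_tsum hb1 hsum1 hsum2
        rw [_root_.tsum_mul_left, ← hCdef] at htail0
        have hpow2 : (lam * t k)^(N+1) = lam^(N+1) * Real.exp (-(((N+1:ℕ)):ℝ) * L k) := by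
          rw [mul_pow, htexp k, ← Real.exp_nat_mul]
          congr 2
          push_cast
          ring
        have htail : (∑' n : ℕ, p (n + (N+1)) k) ≤
            lam^(N+1) * C * Real.exp (-(f a - ε) * L k) := by
          refine htail0.trans ?_
          rw [hpow2]
          calc lam^(N+1) * Real.exp (-(((N+1:ℕ)):ℝ) * L k) * C
              = lam^(N+1) * C * Real.exp (-(((N+1:ℕ)):ℝ) * L k) := by ring
            _ ≤ lam^(N+1) * C * Real.exp (-(f a - ε) * L k) := by
                refine mul_le_mul_of_nonneg_left ?_
                  (mul_nonneg (pow_nonneg hlam.le _) hCnn)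
                rw [Real.exp_le_exp]
                have : f a - ε ≤ ((N+1:ℕ):ℝ) := by push_cast; linarith [hfaN, hε]
                nlinarith [hLpos k]
        rw [hSeq k, ← hsplit, hDdef, add_mul]
        exact add_le_add hhead htail
      have hlogD : Tendsto (fun k => Real.log D / L k) atTop (𝓝 0) :=
        tendsto_const_nhds.div_atTop hLtop
      filter_upwards [hSub, hSpos, hlogD.eventually (gt_mem_nhds hε)] with k hk1 hk2 hk3
      have hlog : Real.log (S k) ≤ Real.log D + (-(f a - ε) * L k) := by
        have h1 := Real.log_le_log hk2 hk1
        rwa [Real.log_mul hDpos.ne' (Real.exp_ne_zero _), Real.log_exp] at h1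
      have h6 : (f a - ε) * L k - Real.log D ≤ -Real.log (S k) := by linarith
      have h7 := (div_le_div_iff_of_pos_right (hLpos k)).2 h6
      have h8 : (f a - ε) - Real.log D / L k = ((f a - ε) * L k - Real.log D) / L k := by
        rw [_root_.sub_div, mul_div_assoc, div_self (hLpos k).ne', mul_one]
      have h9 : b < (f a - ε) - Real.log D / L k := by linarith
      rw [h8] at h9
      exact lt_of_lt_of_le h9 h7
    · intro b hb
      have h1 : ∀ᶠ k in atTop, ub k / L k < b := hubL.eventually (gt_mem_nhds hb)
      filter_upwards [huub, h1] with k hk1 hk2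
      exact lt_of_le_of_lt hk1 hk2
  have hdiv : Tendsto (fun k => (-Real.log (S k) / L k) / f a) atTop (𝓝 1) := by
    have h1 := hmain.div_const (f a)
    rwa [div_self hfapos.ne'] at h1
  refine hdiv.congr fun k => ?_
  show (-Real.log (S k) / L k) / f a = Real.log (S k) / (-(f a) * L k)
  rw [div_div, neg_div, neg_mul, div_neg, mul_comm]
end

section
/- Fix Heston parameters λ > 0, η > 0 and ρ with −1 < ρ < 1 and ρ ≠ 0. Define χ(p) := ρηp − λ and Δ(p) := χ(p)² − η²(p² − p). Then Δ(p) < 0 for all sufficiently large p, and the explosion-time function T*(p) := (2/√(−Δ(p))) · (arctan(√(−Δ(p))/χ(p)) + π·1_{χ(p)<0}) satisfies p · T*(p) → C as p → ∞, where C := (2/(η√(1−ρ²))) · (arctan(√(1−ρ²)/ρ) + π·1_{ρ<0}). -/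
open Filter Topology

/-- **Heston model: asymptotics of the moment explosion time.**
Fix Heston parameters `λ > 0`, `η > 0` and `-1 < ρ < 1` with `ρ ≠ 0`.
With `χ(p) = ρηp - λ` and `Δ(p) = χ(p)² - η²(p² - p)`, one has `Δ(p) < 0` for all
sufficiently large `p`, and the explosion time
`T*(p) = (2/√(-Δ(p))) (arctan(√(-Δ(p))/χ(p)) + π·1_{χ(p)<0})` satisfies
`p · T*(p) → C` as `p → ∞`, where
`C = (2/(η√(1-ρ²))) (arctan(√(1-ρ²)/ρ) + π·1_{ρ<0})`. -/
theorem heston_explosion_time_asymptotics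
    (lam η ρ : ℝ) (hlam : 0 < lam) (hη : 0 < η)
    (hρ1 : -1 < ρ) (hρ2 : ρ < 1) (hρ0 : ρ ≠ 0)
    (χ Δ Tstar : ℝ → ℝ)
    (hχ : ∀ p, χ p = ρ * η * p - lam)
    (hΔ : ∀ p, Δ p = (χ p) ^ 2 - η ^ 2 * (p ^ 2 - p))
    (hT : ∀ p, Tstar p = 2 / Real.sqrt (-(Δ p)) *
        (Real.arctan (Real.sqrt (-(Δ p)) / χ p) + Real.pi * (if χ p < 0 then 1 else 0))) :
    (∀ᶠ p in atTop, Δ p < 0) ∧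
    Tendsto (fun p => p * Tstar p) atTop
      (𝓝 (2 / (η * Real.sqrt (1 - ρ ^ 2)) *
        (Real.arctan (Real.sqrt (1 - ρ ^ 2) / ρ) + Real.pi * (if ρ < 0 then 1 else 0)))) := by
  have h1ρ : 0 < 1 - ρ ^ 2 := by nlinarith
  have hs1ρ : 0 < Real.sqrt (1 - ρ ^ 2) := Real.sqrt_pos.mpr h1ρ
  have hρη : ρ * η ≠ 0 := mul_ne_zero hρ0 hη.ne'
  -- χ p / p → ρ * η
  have hinv : Tendsto (fun p : ℝ => 1 / p) atTop (𝓝 0) :=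
    tendsto_const_nhds.div_atTop tendsto_id
  have hC : Tendsto (fun p => χ p / p) atTop (𝓝 (ρ * η)) := by
    have h0 : Tendsto (fun p : ℝ => lam / p) atTop (𝓝 0) :=
      tendsto_const_nhds.div_atTop tendsto_id
    have h1 : Tendsto (fun p : ℝ => ρ * η - lam / p) atTop (𝓝 (ρ * η - 0)) :=
      tendsto_const_nhds.sub h0
    rw [sub_zero] at h1
    refine h1.congr' ?_
    filter_upwards [eventually_gt_atTop (0 : ℝ)] with p hp
    rw [hχ]; field_simp
  -- Δ p / p² → -η²(1-ρ²)
  have hD : Tendsto (fun p => Δ p / p ^ 2) atTop (𝓝 (-(η ^ 2 * (1 - ρ ^ 2)))) := by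
    have h1 : Tendsto (fun p : ℝ => (χ p / p) ^ 2 - η ^ 2 * (1 - 1 / p)) atTop
        (𝓝 ((ρ * η) ^ 2 - η ^ 2 * (1 - 0))) :=
      (hC.pow 2).sub (tendsto_const_nhds.mul (tendsto_const_nhds.sub hinv))
    have heq : ((ρ * η) ^ 2 - η ^ 2 * (1 - 0)) = -(η ^ 2 * (1 - ρ ^ 2)) := by ring
    rw [heq] at h1
    refine h1.congr' ?_
    filter_upwards [eventually_gt_atTop (0 : ℝ)] with p hp
    rw [hΔ]; field_simp
  -- Δ p < 0 eventually
  have hDneg : ∀ᶠ p in atTop, Δ p < 0 := by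
    have h1 : ∀ᶠ p in atTop, Δ p / p ^ 2 < 0 :=
      hD.eventually_lt_const (by nlinarith [sq_nonneg η, mul_pos (mul_pos hη hη) h1ρ])
    filter_upwards [h1, eventually_gt_atTop (0 : ℝ)] with p hp hp0
    have := (div_neg_iff).mp hp
    rcases this with ⟨h, h'⟩ | ⟨h, h'⟩
    · nlinarith
    · exact h
  refine ⟨hDneg, ?_⟩
  -- √(-Δ p)/p → η √(1-ρ²)
  have hA : Tendsto (fun p => Real.sqrt (-(Δ p)) / p) atTop (𝓝 (η * Real.sqrt (1 - ρ ^ 2))) := by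
    have h0 : Tendsto (fun p => -(Δ p / p ^ 2)) atTop (𝓝 (η ^ 2 * (1 - ρ ^ 2))) := by
      simpa using hD.neg
    have h1 : Tendsto (fun p => Real.sqrt (-(Δ p) / p ^ 2)) atTop
        (𝓝 (Real.sqrt (η ^ 2 * (1 - ρ ^ 2)))) := by
      have := (Real.continuous_sqrt.tendsto _).comp h0
      refine this.congr fun p => ?_
      simp only [Function.comp, neg_div]
    have heq : Real.sqrt (η ^ 2 * (1 - ρ ^ 2)) = η * Real.sqrt (1 - ρ ^ 2) := by
      rw [Real.sqrt_mul (by positivity), Real.sqrt_sq hη.le]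
    rw [heq] at h1
    refine h1.congr' ?_
    filter_upwards [hDneg, eventually_gt_atTop (0 : ℝ)] with p hp hp0
    rw [Real.sqrt_div (by linarith), Real.sqrt_sq hp0.le]
  have hden : η * Real.sqrt (1 - ρ ^ 2) ≠ 0 := by positivity
  -- √(-Δ p)/χ p → √(1-ρ²)/ρ
  have hB : Tendsto (fun p => Real.sqrt (-(Δ p)) / χ p) atTop
      (𝓝 (Real.sqrt (1 - ρ ^ 2) / ρ)) := by
    have h1 := hA.div hC hρη
    have heq : η * Real.sqrt (1 - ρ ^ 2) / (ρ * η) = Real.sqrt (1 - ρ ^ 2) / ρ := by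
      field_simp
    rw [heq] at h1
    refine h1.congr' ?_
    filter_upwards [eventually_gt_atTop (0 : ℝ)] with p hp
    rcases eq_or_ne (χ p) 0 with h | h
    · simp [h]
    · simp only [Pi.div_apply]; field_simp
  -- sign of χ matches sign of ρ eventually
  have hsign : ∀ᶠ p in atTop, ((χ p < 0) ↔ (ρ < 0)) := by
    rcases lt_or_gt_of_ne hρ0 with hρneg | hρpos
    · have : ρ * η < 0 := mul_neg_of_neg_of_pos hρneg hη
      have h1 : ∀ᶠ p in atTop, χ p / p < 0 := hC.eventually_lt_const this
      filter_upwards [h1, eventually_gt_atTop (0 : ℝ)] with p hp hp0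
      have : χ p < 0 := by
        rcases div_neg_iff.mp hp with ⟨h, h'⟩ | ⟨h, h'⟩
        · linarith
        · exact h
      simp [this, hρneg]
    · have : 0 < ρ * η := mul_pos hρpos hη
      have h1 : ∀ᶠ p in atTop, 0 < χ p / p := hC.eventually_const_lt this
      filter_upwards [h1, eventually_gt_atTop (0 : ℝ)] with p hp hp0
      have : 0 < χ p := by
        rcases div_pos_iff.mp hp with ⟨h, h'⟩ | ⟨h, h'⟩
        · exact h
        · linarith
      simp [not_lt.mpr this.le, not_lt.mpr hρpos.le]
  -- main limit
  set c : ℝ := if ρ < 0 then 1 else 0 with hc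
  have hmain : Tendsto (fun p => 2 / (Real.sqrt (-(Δ p)) / p) *
      (Real.arctan (Real.sqrt (-(Δ p)) / χ p) + Real.pi * c)) atTop
      (𝓝 (2 / (η * Real.sqrt (1 - ρ ^ 2)) *
        (Real.arctan (Real.sqrt (1 - ρ ^ 2) / ρ) + Real.pi * c))) := by
    exact (tendsto_const_nhds.div hA hden).mul
      (((Real.continuous_arctan.tendsto _).comp hB).add tendsto_const_nhds)
  refine hmain.congr' ?_
  filter_upwards [hsign] with p hp
  rw [hT]
  have hind : (if χ p < 0 then (1 : ℝ) else 0) = c := by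
    rw [hc]
    by_cases h : ρ < 0 <;> simp [h, hp.symm, hp]
  rw [hind]
  rw [div_div_eq_mul_div]
  ring
end
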